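/- arXiv:2205.01383 — 10 statements merged into one kernel-verified Lean document; each statement's English description precedes it below -/
import Mathlib

section
/- For every natural number n, the number of Łukasiewicz paths of length n equals the n-th Catalan number catalan n = C(2n, n)/(n+1). -/
/-- A Łukasiewicz path of length `n`: a list of `n` integer steps, each `≥ -1`,
with all partial sums `≥ 0` and total sum `0`. -/
def IsLukasiewicz (w : List ℤ) (n : ℕ) : Prop :=
  w.length = n ∧ (∀ x ∈ w, -1 ≤ x) ∧ (∀ i, 0 ≤ (w.take i).sum) ∧ w.sum = 0

section LukAux

open List DyckStep

/-- Encode a list of steps as a Dyck-step list: step `k` becomes `U^(k+1) D`. -/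
def lukPhi (w : List ℤ) : List DyckStep :=
  (w.map fun k => replicate (k + 1).toNat U ++ [D]).flatten

/-- Decode a Dyck-step list into a list of steps. -/
def lukPsi : ℕ → List DyckStep → List ℤ
  | _, [] => []
  | acc, U :: rest => lukPsi (acc + 1) rest
  | acc, D :: rest => ((acc : ℤ) - 1) :: lukPsi 0 rest

@[simp] lemma lukPhi_nil : lukPhi [] = [] := rfl

lemma lukPhi_cons (k : ℤ) (w : List ℤ) :
    lukPhi (k :: w) = replicate (k + 1).toNat U ++ D :: lukPhi w := by
  simp [lukPhi]

lemma lukPhi_append (a b : List ℤ) : lukPhi (a ++ b) = lukPhi a ++ lukPhi b := by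
  simp [lukPhi]

lemma lukPhi_countU (w : List ℤ) (h : ∀ x ∈ w, -1 ≤ x) :
    ((lukPhi w).count U : ℤ) = w.sum + w.length := by
  induction w with
  | nil => simp
  | cons k w ih =>
    have hk : -1 ≤ k := h k (mem_cons_self ..)
    rw [lukPhi_cons]
    have := ih (fun x hx => h x (mem_cons_of_mem _ hx))
    simp only [count_append, count_cons, count_replicate, if_pos rfl, sum_cons,
      length_cons, if_neg (by simp : ¬(D = U))]
    push_cast [Int.toNat_of_nonneg (show (0:ℤ) ≤ k + 1 by omega)] at this ⊢
    simp only [beq_self_eq_true, if_true, show (D == U) = false from rfl, if_false, Bool.false_eq_true, reduceIte]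
    omega

lemma lukPhi_countD (w : List ℤ) : (lukPhi w).count D = w.length := by
  induction w with
  | nil => simp
  | cons k w ih =>
    rw [lukPhi_cons]
    simp [count_append, count_replicate, ih]

lemma dyck_length_eq (l : List DyckStep) : l.length = l.count U + l.count D := by
  induction l with
  | nil => simp
  | cons s l ih => cases s <;> simp [count_cons, ih] <;> omega

@[simp] lemma lukPsi_nil (acc : ℕ) : lukPsi acc [] = [] := rfl
@[simp] lemma lukPsi_U (acc : ℕ) (l : List DyckStep) :
    lukPsi acc (U :: l) = lukPsi (acc + 1) l := rfl
@[simp] lemma lukPsi_D (acc : ℕ) (l : List DyckStep) :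
    lukPsi acc (D :: l) = ((acc : ℤ) - 1) :: lukPsi 0 l := rfl

lemma lukPsi_mem (l : List DyckStep) (acc : ℕ) (x : ℤ) (hx : x ∈ lukPsi acc l) : -1 ≤ x := by
  induction l generalizing acc with
  | nil => simp at hx
  | cons s l ih =>
    cases s with
    | U => exact ih _ hx
    | D =>
      rw [lukPsi_D, mem_cons] at hx
      rcases hx with h | h
      · omega
      · exact ih _ h

lemma lukPsi_length (l : List DyckStep) (acc : ℕ) : (lukPsi acc l).length = l.count D := by
  induction l generalizing acc with
  | nil => simp
  | cons s l ih =>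
    cases s with
    | U => rw [lukPsi_U, ih]; simp [count_cons]
    | D => rw [lukPsi_D]; simp [count_cons, ih]

lemma lukPsi_replicate (m acc : ℕ) (l : List DyckStep) :
    lukPsi acc (replicate m U ++ l) = lukPsi (acc + m) l := by
  induction m generalizing acc with
  | zero => simp
  | succ m ih =>
    rw [replicate_succ, cons_append, lukPsi_U, ih]
    ring_nf

lemma lukPsi_lukPhi (w : List ℤ) (h : ∀ x ∈ w, -1 ≤ x) : lukPsi 0 (lukPhi w) = w := by
  induction w with
  | nil => simp
  | cons k w ih =>
    have hk : -1 ≤ k := h k (mem_cons_self ..)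
    rw [lukPhi_cons, lukPsi_replicate, lukPsi_D, ih (fun x hx => h x (mem_cons_of_mem _ hx))]
    congr 1
    omega

lemma lukPhi_lukPsi (l : List DyckStep) (acc : ℕ) (h : l.getLast? = some D) :
    lukPhi (lukPsi acc l) = replicate acc U ++ l := by
  induction l generalizing acc with
  | nil => simp at h
  | cons s l ih =>
    cases s with
    | U =>
      have hl : l ≠ [] := by rintro rfl; simp at h
      obtain ⟨a, l', rfl⟩ := exists_cons_of_ne_nil hl
      rw [getLast?_cons_cons] at h
      rw [lukPsi_U, ih _ h, replicate_succ']
      simp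
    | D =>
      rw [lukPsi_D, lukPhi_cons]
      have : ((acc : ℤ) - 1 + 1).toNat = acc := by omega
      rw [this]
      rcases eq_or_ne l [] with rfl | hl
      · simp
      · obtain ⟨a, l', rfl⟩ := exists_cons_of_ne_nil hl
        rw [getLast?_cons_cons] at h
        rw [ih _ h]
        simp

lemma lukPhi_prefix_count (w : List ℤ) (h1 : ∀ x ∈ w, -1 ≤ x) (acc : ℤ)
    (h2 : ∀ i, 0 ≤ acc + (w.take i).sum) (i : ℕ) :
    (((lukPhi w).take i).count D : ℤ) ≤ acc + ((lukPhi w).take i).count U := by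
  induction w generalizing acc i with
  | nil =>
    have : 0 ≤ acc := by simpa using h2 0
    simpa using this
  | cons k w ih =>
    have hk : -1 ≤ k := h1 k (mem_cons_self ..)
    have hacc : 0 ≤ acc := by simpa using h2 0
    have h1' : ∀ x ∈ w, -1 ≤ x := fun x hx => h1 x (mem_cons_of_mem _ hx)
    have h2' : ∀ j, 0 ≤ (acc + k) + (w.take j).sum := by
      intro j
      have := h2 (j + 1)
      rw [take_succ_cons, sum_cons] at this
      omega
    rw [lukPhi_cons]
    set m := (k + 1).toNat with hm
    have hmk : (m : ℤ) = k + 1 := by omega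
    rw [take_append, length_replicate, take_replicate]
    by_cases him : i ≤ m
    · have : i - m = 0 := by omega
      rw [this, take_zero, append_nil]
      have e1 : (replicate (min i m) U).count D = 0 := by
        simp [count_replicate]
      have e2 : (replicate (min i m) U).count U = min i m := by
        simp [count_replicate]
      rw [e1, e2]
      push_cast
      omega
    · have h1m : 1 ≤ i - m := by omega
      obtain ⟨j, hj⟩ : ∃ j, i - m = j + 1 := ⟨i - m - 1, by omega⟩
      rw [hj, take_succ_cons, min_eq_right (by omega)]
      have e1 : ∀ l : List DyckStep, (replicate m U ++ D :: l).count D = 1 + l.count D := by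
        intro l; simp [count_replicate, count_cons]; omega
      have e2 : ∀ l : List DyckStep, (replicate m U ++ D :: l).count U = m + l.count U := by
        intro l; simp [count_replicate, count_cons]
      rw [e1, e2]
      have := ih h1' (acc + k) h2' j
      push_cast
      omega

lemma lukPhi_lukPsi_dyck (p : DyckWord) : lukPhi (lukPsi 0 p.toList) = p.toList := by
  rcases eq_or_ne p 0 with rfl | h
  · rfl
  · have hne : p.toList ≠ [] := DyckWord.toList_ne_nil.mpr h
    have := lukPhi_lukPsi p.toList 0
      (by rw [getLast?_eq_getLast hne, p.getLast_eq_D hne])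
    simpa using this

lemma luk_of_dyck (p : DyckWord) : IsLukasiewicz (lukPsi 0 p.toList) p.semilength := by
  set w := lukPsi 0 p.toList with hw
  have hmem : ∀ x ∈ w, -1 ≤ x := fun x hx => lukPsi_mem _ _ _ hx
  have hphi : lukPhi w = p.toList := lukPhi_lukPsi_dyck p
  have hlen : w.length = p.semilength := by
    rw [hw, lukPsi_length, ← DyckWord.semilength_eq_count_D]
  have hpartial : ∀ i, 0 ≤ (w.take i).sum := by
    intro i
    set v := w.take i with hv
    have hmemv : ∀ x ∈ v, -1 ≤ x := fun x hx => hmem x (mem_of_mem_take hx)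
    have hsplit : lukPhi v ++ lukPhi (w.drop i) = p.toList := by
      rw [← lukPhi_append, take_append_drop, hphi]
    have hpre : lukPhi v = p.toList.take (lukPhi v).length := by
      conv_rhs => rw [← hsplit]
      rw [take_left]
    have hd := p.count_D_le_count_U (lukPhi v).length
    rw [← hpre] at hd
    have hU := lukPhi_countU v hmemv
    have hD := lukPhi_countD v
    omega
  refine ⟨hlen, hmem, hpartial, ?_⟩
  have hU := lukPhi_countU w hmem
  have hD := lukPhi_countD w
  rw [hphi] at hU hD
  have := p.count_U_eq_count_D
  omega

def lukEquiv (n : ℕ) :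
    {w : List ℤ // IsLukasiewicz w n} ≃ {p : DyckWord // p.semilength = n} where
  toFun w :=
    ⟨⟨lukPhi w.1,
      by
        have hU := lukPhi_countU w.1 w.2.2.1
        have hD := lukPhi_countD w.1
        have hlen := w.2.1
        have hsum := w.2.2.2.2
        omega,
      fun i => by
        have := lukPhi_prefix_count w.1 w.2.2.1 0 (by simpa using w.2.2.2.1) i
        omega⟩,
      by
        show (lukPhi w.1).count U = n
        have hU := lukPhi_countU w.1 w.2.2.1
        have hlen := w.2.1
        have hsum := w.2.2.2.2
        omega⟩
  invFun p := ⟨lukPsi 0 p.1.toList, by have := luk_of_dyck p.1; rwa [p.2] at this⟩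
  left_inv w := Subtype.ext (lukPsi_lukPhi _ w.2.2.1)
  right_inv p := Subtype.ext (DyckWord.ext (lukPhi_lukPsi_dyck p.1))

end LukAux

theorem lukasiewicz_count_eq_catalan (n : ℕ) :
    Nat.card {w : List ℤ // IsLukasiewicz w n} = catalan n := by
  rw [Nat.card_congr (lukEquiv n), Nat.card_eq_fintype_card,
    DyckWord.card_dyckWord_semilength_eq_catalan]
end

section
/- For all n ≥ 1 and k ≥ 0, the number a(n,k) of partial Łukasiewicz paths of length n ending at height k satisfies (n+k+1) · a(n,k) = (k+2) · C(2n+k−1, n−1); equivalently a(n,k) = ((k+2)/(n+k+1)) · C(2n+k−1, n−1). -/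
/-- A partial Łukasiewicz path of length `n` ending at height `k`:
a list of `n` integer steps, each `≥ -1`, with all partial sums `≥ 0`
and total sum `k`. -/
def IsPartialLuk (w : List ℤ) (n k : ℕ) : Prop :=
  w.length = n ∧ (∀ x ∈ w, -1 ≤ x) ∧ (∀ i, 0 ≤ (w.take i).sum) ∧ w.sum = k

lemma neg_length_le_sum (l : List ℤ) (h : ∀ x ∈ l, -1 ≤ x) : -(l.length : ℤ) ≤ l.sum := by
  induction l with
  | nil => simp
  | cons a t ih =>
    have ha := h a (by simp)
    have := ih (fun x hx => h x (by simp [hx]))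
    simp only [List.sum_cons, List.length_cons]
    push_cast
    omega

lemma entry_bound {w : List ℤ} {n k : ℕ} (hw : IsPartialLuk w n k) (i : ℕ)
    (hi : i < w.length) : w[i] + 1 ≤ (n : ℤ) + k := by
  obtain ⟨hlen, hmem, hpart, hsum⟩ := hw
  have hget : (w.take (i+1)).sum = (w.take i).sum + w[i] := List.sum_take_succ w i hi
  have hd : (w.take (i+1)).sum + (w.drop (i+1)).sum = w.sum := List.sum_take_add_sum_drop w _
  have hdrop : -(((w.drop (i+1)).length : ℤ)) ≤ (w.drop (i+1)).sum :=
    neg_length_le_sum _ (fun x hx => hmem x (List.mem_of_mem_drop hx))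
  have hp := hpart i
  have hL : (w.drop (i+1)).length = w.length - (i+1) := List.length_drop
  have hLn : (w.drop (i+1)).length ≤ n := by omega
  rw [hsum] at hd
  have hLn' : ((w.drop (i+1)).length : ℤ) ≤ (n : ℤ) := by exact_mod_cast hLn
  omega

instance lukFinite (n k : ℕ) : Finite {w : List ℤ // IsPartialLuk w n k} := by
  apply Finite.of_injective (β := Fin n → Fin (n + k + 2))
    (fun w i => ⟨(w.1[(i : ℕ)]'(by rw [w.2.1]; exact i.isLt) + 1).toNat, by
      have hb := entry_bound w.2 i (by rw [w.2.1]; exact i.isLt)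
      have hm := w.2.2.1 _ (List.getElem_mem (l := w.1) (by rw [w.2.1]; exact i.isLt))
      omega⟩)
  intro ⟨w, hw⟩ ⟨v, hv⟩ h
  simp only [Subtype.mk.injEq]
  apply List.ext_getElem (hw.1.trans hv.1.symm)
  intro i h1 h2
  have := congrFun h ⟨i, hw.1 ▸ h1⟩
  simp only [Fin.mk.injEq] at this
  have hwm := hw.2.1 _ (List.getElem_mem h1)
  have hvm := hv.2.1 _ (List.getElem_mem h2)
  omega

noncomputable def luk (n k : ℕ) : ℕ := Nat.card {w : List ℤ // IsPartialLuk w n k}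

lemma luk_one (k : ℕ) : luk 1 k = 1 := by
  have key : ∀ w : List ℤ, IsPartialLuk w 1 k ↔ w = [(k : ℤ)] := by
    intro w
    constructor
    · rintro ⟨hlen, hmem, hpart, hsum⟩
      match w, hlen with
      | [a], _ => simp_all
    · rintro rfl
      refine ⟨rfl, by intro x hx; simp at hx; omega, ?_, by simp⟩
      intro i
      cases i with
      | zero => simp
      | succ j =>
        rw [List.take_of_length_le (by simp)]
        simp
  haveI : Unique {w : List ℤ // IsPartialLuk w 1 k} :=
    { default := ⟨[(k:ℤ)], (key _).2 rfl⟩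
      uniq := fun ⟨w, hw⟩ => Subtype.ext ((key w).1 hw) }
  simp [luk, Nat.card_unique]

lemma luk_rec (n k : ℕ) :
    luk (n + 1) k = ∑ m ∈ Finset.range (k + 2), luk n m := by
  have key : Nat.card ((m : Fin (k+2)) × {w : List ℤ // IsPartialLuk w n m}) =
      Nat.card {w : List ℤ // IsPartialLuk w (n+1) k} := by
    apply Nat.card_eq_of_bijective
      (fun p => ⟨p.2.1 ++ [(k : ℤ) - ((p.1 : ℕ) : ℤ)], by
        obtain ⟨⟨m, hm⟩, w, hlen, hmem, hpart, hsum⟩ := p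
        refine ⟨by simp [hlen], ?_, ?_, ?_⟩
        · intro x hx
          rcases List.mem_append.1 hx with h | h
          · exact hmem x h
          · simp at h; omega
        · intro i
          rcases le_or_gt i w.length with h | h
          · rw [List.take_append_of_le_length h]; exact hpart i
          · rw [List.take_of_length_le (by simp; omega)]
            simp [hsum]
        · simp [hsum]⟩)
    constructor
    · rintro ⟨⟨m, hm⟩, w, hw⟩ ⟨⟨m', hm'⟩, w', hw'⟩ h
      simp only [Subtype.mk.injEq] at h
      obtain ⟨h1, _⟩ := List.append_inj h (hw.1.trans hw'.1.symm)
      have hmm : ((m : ℕ) : ℤ) = ((m' : ℕ) : ℤ) := by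
        rw [← hw.2.2.2, ← hw'.2.2.2, h1]
      have hmm' : m = m' := by exact_mod_cast hmm
      subst hmm'
      subst h1
      rfl
    · rintro ⟨w, hlen, hmem, hpart, hsum⟩
      have hne : w ≠ [] := by intro h; subst h; simp at hlen
      have hsplit : w.dropLast ++ [w.getLast hne] = w := List.dropLast_append_getLast hne
      have hyt : w.dropLast = w.take n := by
        rw [List.dropLast_eq_take, hlen]; simp
      have hylen : w.dropLast.length = n := by
        rw [hyt, List.length_take, hlen]; simp
      have hjm : -1 ≤ w.getLast hne := hmem _ (List.getLast_mem hne)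
      have hysum : w.dropLast.sum + w.getLast hne = k := by
        rw [← hsum]
        conv_rhs => rw [← hsplit]
        simp
      have hys0 : 0 ≤ w.dropLast.sum := by rw [hyt]; exact hpart n
      have hmle : w.dropLast.sum ≤ (k : ℤ) + 1 := by omega
      have hmlt : w.dropLast.sum.toNat < k + 2 := by omega
      refine ⟨⟨⟨w.dropLast.sum.toNat, hmlt⟩, ⟨w.dropLast, hylen, ?_, ?_, by
        simp [Int.toNat_of_nonneg hys0]⟩⟩, ?_⟩
      · exact fun x hx => hmem x ((List.dropLast_sublist w).mem hx)
      · intro i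
        rw [hyt, List.take_take]
        exact hpart _
      · apply Subtype.ext
        show w.dropLast ++ [(k : ℤ) - ((w.dropLast.sum.toNat : ℕ) : ℤ)] = w
        conv_rhs => rw [← hsplit]
        congr 1
        rw [Int.toNat_of_nonneg hys0]
        simp
        omega
  haveI : ∀ m : ℕ, Fintype {w : List ℤ // IsPartialLuk w n m} := fun m => Fintype.ofFinite _
  rw [luk, ← key, Nat.card_eq_fintype_card, Fintype.card_sigma]
  rw [Finset.sum_range fun m => luk n m]
  congr 1
  ext m
  rw [luk, Nat.card_eq_fintype_card]

lemma luk_formula : ∀ n k : ℕ,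
    (n + 1 + k + 1) * luk (n + 1) k = (k + 2) * Nat.choose (2 * n + k + 1) n := by
  intro n
  induction n with
  | zero =>
    intro k
    simp [luk_one, Nat.choose_zero_right]
    ring
  | succ n ihn =>
    intro k
    rw [luk_rec]
    induction k with
    | zero =>
      rw [Finset.sum_range_succ, Finset.sum_range_one]
      have h0 := ihn 0
      have h1 := ihn 1
      have P1 : Nat.choose (2*(n+1)+0+1) (n+1)
          = Nat.choose (2*n+2) n + Nat.choose (2*n+2) (n+1) := by
        rw [show 2*(n+1)+0+1 = (2*n+2)+1 by ring]
        exact Nat.choose_succ_succ (2*n+2) n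
      have P2 : Nat.choose (2*n+2) (n+1)
          = Nat.choose (2*n+1) n + Nat.choose (2*n+1) (n+1) := by
        exact Nat.choose_succ_succ (2*n+1) n
      have P3 : Nat.choose (2*n+1) (n+1) = Nat.choose (2*n+1) n :=
        Nat.choose_symm_half n
      have R : Nat.choose (2*n+2) (n+1) * (n+1) = Nat.choose (2*n+2) n * (n+2) := by
        have := Nat.choose_succ_right_eq (2*n+2) n
        rwa [show 2*n+2-n = n+2 by omega] at this
      apply Nat.eq_of_mul_eq_mul_left (show 0 < n + 2 by omega)
      rw [show 2*n+0+1 = 2*n+1 by ring] at h0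
      rw [show 2*n+1+1 = 2*n+2 by ring] at h1
      zify at h0 h1 P1 P2 P3 R ⊢
      linear_combination (n+3)*h0 + (n+2)*h1 - 2*(n+2)*P1 - (n+3)*P2 - (n+3)*P3 - R
    | succ k ihk =>
      rw [Finset.sum_range_succ]
      have ha := ihn (k+2)
      have P : Nat.choose (2*(n+1)+(k+1)+1) (n+1)
          = Nat.choose (2*n+k+3) n + Nat.choose (2*n+k+3) (n+1) := by
        rw [show 2*(n+1)+(k+1)+1 = (2*n+k+3)+1 by ring]
        exact Nat.choose_succ_succ (2*n+k+3) n
      have R : Nat.choose (2*n+k+3) (n+1) * (n+1)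
          = Nat.choose (2*n+k+3) n * (n+k+3) := by
        have := Nat.choose_succ_right_eq (2*n+k+3) n
        rwa [show 2*n+k+3-n = n+k+3 by omega] at this
      rw [show 2*n+(k+2)+1 = 2*n+k+3 by ring] at ha
      rw [show 2*(n+1)+k+1 = 2*n+k+3 by ring] at ihk
      apply Nat.eq_of_mul_eq_mul_left (show 0 < n + k + 3 by omega)
      zify at ha P R ihk ⊢
      linear_combination (n+k+4)*ihk + (n+k+3)*ha - (n+k+3)*(k+3)*P - R

theorem partialLuk_count (n k : ℕ) (hn : 1 ≤ n) :
    (n + k + 1) * Nat.card {w : List ℤ // IsPartialLuk w n k} =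
      (k + 2) * Nat.choose (2 * n + k - 1) (n - 1) := by
  obtain ⟨n', rfl⟩ : ∃ n', n = n' + 1 := ⟨n - 1, by omega⟩
  rw [show 2 * (n' + 1) + k - 1 = 2 * n' + k + 1 by omega,
    show n' + 1 - 1 = n' by omega]
  exact luk_formula n' k
end

section
/- For all n ≥ 1 and k ≥ 1, the number f(n,k) of partial Łukasiewicz paths of length n ending at height k whose last step is an up-step satisfies (n+k−1) · f(n,k) = k · C(2n+k−3, n−1). -/
/-- The last step of the path is an up-step, i.e. `w_n ≥ 1`. -/
def LastStepUp (w : List ℤ) : Prop := ∃ x, w.getLast? = some x ∧ 1 ≤ x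

/-! ### Auxiliary counting function -/

/-- `T m t = ∑_{i ≤ t} (number of partial Łukasiewicz paths of length m ending at i)`. -/
def T : ℕ → ℕ → ℕ
  | 0, _ => 1
  | m+1, t => ∑ j ∈ Finset.range (t+1), T m (j+1)

lemma T_succ_succ (m t : ℕ) : T (m+1) (t+1) = T (m+1) t + T m (t+2) := by
  show (∑ j ∈ Finset.range (t+2), T m (j+1)) = _
  rw [Finset.sum_range_succ]; rfl

lemma T_eq (m t : ℕ) :
    (T m t : ℤ) = Nat.choose (2*m+t) m - Nat.choose (2*m+t) (m+t+1) := by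
  induction m generalizing t with
  | zero => simp [T, Nat.choose_eq_zero_of_lt]
  | succ m ih =>
    induction t with
    | zero =>
      have h0 : T (m+1) 0 = T m 1 := by
        show (∑ j ∈ Finset.range 1, T m (j+1)) = _
        simp
      have h1 : (2*m+2).choose (m+1) = (2*m+1).choose m + (2*m+1).choose (m+1) := by
        simpa using Nat.choose_succ_succ (2*m+1) m
      have h2 : (2*m+2).choose (m+2) = (2*m+1).choose (m+1) + (2*m+1).choose (m+2) := by
        simpa using Nat.choose_succ_succ (2*m+1) (m+1)
      have h3 := ih 1
      have e2 : 2*(m+1)+0 = 2*m+2 := by ring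
      have e3 : m+1+0+1 = m+2 := by ring
      rw [h0, e2, e3, h3]
      rw [show m+1+1 = m+2 from rfl] at h3 ⊢
      push_cast [h1, h2]
      ring
    | succ t iht =>
      have h0 := T_succ_succ m t
      have h1 : (2*(m+1)+(t+1)).choose (m+1)
          = (2*m+t+2).choose m + (2*m+t+2).choose (m+1) := by
        have : 2*(m+1)+(t+1) = (2*m+t+2)+1 := by ring
        rw [this]
        simpa using Nat.choose_succ_succ (2*m+t+2) m
      have h2 : (2*(m+1)+(t+1)).choose (m+1+(t+1)+1)
          = (2*m+t+2).choose (m+t+2) + (2*m+t+2).choose (m+t+3) := by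
        have e : 2*(m+1)+(t+1) = (2*m+t+2)+1 := by ring
        have e' : m+1+(t+1)+1 = (m+t+2)+1 := by ring
        rw [e, e']
        simpa using Nat.choose_succ_succ (2*m+t+2) (m+t+2)
      have h3 := ih (t+2)
      rw [show 2*m+(t+2) = 2*m+t+2 from by ring, show m+(t+2)+1 = m+t+3 from by ring] at h3
      rw [show 2*(m+1)+t = 2*m+t+2 from by ring, show m+1+t+1 = m+t+2 from by ring] at iht
      rw [h0]
      push_cast [iht, h3, h1, h2]
      ring

lemma T_mul (m t : ℕ) :
    (m+t+1) * T m t = (t+1) * Nat.choose (2*m+t) m := by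
  have key : (2*m+t).choose (m+t+1) * (m+t+1) = (2*m+t).choose m * m := by
    have h := Nat.choose_succ_right_eq (2*m+t) (m+t)
    have hs : (2*m+t).choose m = (2*m+t).choose (m+t) := by
      have := Nat.choose_symm (show m+t ≤ 2*m+t by omega)
      rwa [show 2*m+t - (m+t) = m by omega] at this
    rw [h, hs, show 2*m+t - (m+t) = m by omega]
  zify
  rw [T_eq]
  have keyZ : ((2*m+t).choose (m+t+1) : ℤ) * (m+t+1) = (2*m+t).choose m * m := by
    exact_mod_cast congrArg (Nat.cast : ℕ → ℤ) key
  linear_combination -keyZ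

/-! ### Finsets of partial Łukasiewicz paths -/

def LukF : ℕ → ℕ → Finset (List ℤ)
  | 0, k => if k = 0 then {([] : List ℤ)} else ∅
  | n+1, k => (Finset.range (k+2)).biUnion fun m => (LukF n m).image fun w => w ++ [(k:ℤ) - m]

lemma luk_append (v : List ℤ) (x : ℤ) (n k : ℕ) :
    IsPartialLuk (v ++ [x]) (n+1) k ↔
      ∃ m : ℕ, (m:ℤ) + x = k ∧ -1 ≤ x ∧ IsPartialLuk v n m := by
  constructor
  · rintro ⟨hlen, hmem, hpre, hsum⟩
    rw [List.length_append] at hlen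
    simp only [List.length_singleton] at hlen
    have hvlen : v.length = n := by omega
    have hsum' : v.sum + x = (k:ℤ) := by
      rw [List.sum_append] at hsum; simpa using hsum
    have hv0 : 0 ≤ v.sum := by
      have := hpre n
      rwa [List.take_append_of_le_length (by omega), ← hvlen, List.take_length] at this
    refine ⟨v.sum.toNat, by omega, hmem x (by simp), hvlen, fun y hy => hmem y (by simp [hy]),
      fun i => ?_, by omega⟩
    rcases le_or_gt i n with hi | hi
    · have := hpre i
      rwa [List.take_append_of_le_length (by omega)] at this
    · rw [List.take_of_length_le (by omega)]; exact hv0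
  · rintro ⟨m, hmx, hx, hlen, hmem, hpre, hsum⟩
    refine ⟨by simp [hlen], ?_, fun i => ?_, ?_⟩
    · intro y hy
      rcases List.mem_append.1 hy with h | h
      · exact hmem y h
      · simp at h; omega
    · rcases le_or_gt i n with hi | hi
      · rw [List.take_append_of_le_length (by omega)]; exact hpre i
      · rw [List.take_of_length_le (by simp [hlen]; omega), List.sum_append]
        simp only [List.sum_cons, List.sum_nil, add_zero]
        omega
    · rw [List.sum_append]; simp only [List.sum_cons, List.sum_nil, add_zero]; omega

lemma mem_LukF : ∀ (n k : ℕ) (w : List ℤ), w ∈ LukF n k ↔ IsPartialLuk w n k := by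
  intro n
  induction n with
  | zero =>
    intro k w
    rcases Nat.eq_zero_or_pos k with rfl | hk
    · rw [show LukF 0 0 = {([] : List ℤ)} from by simp [LukF], Finset.mem_singleton]
      constructor
      · rintro rfl; exact ⟨rfl, by simp, by simp, by simp⟩
      · rintro ⟨hlen, -, -, -⟩; exact List.length_eq_zero_iff.1 hlen
    · rw [show LukF 0 k = ∅ from by simp [LukF]; omega]
      simp only [Finset.notMem_empty, false_iff]
      rintro ⟨hlen, -, -, hsum⟩
      rw [List.length_eq_zero_iff.1 hlen] at hsum
      simp at hsum; omega
  | succ n ih =>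
    intro k w
    simp only [LukF, Finset.mem_biUnion, Finset.mem_range, Finset.mem_image]
    constructor
    · rintro ⟨m, hm, v, hv, rfl⟩
      rw [luk_append]
      exact ⟨m, by ring, by omega, (ih m v).1 hv⟩
    · intro hw
      have hne : w ≠ [] := by
        rintro rfl; exact absurd hw.1 (by simp)
      obtain ⟨v, x, rfl⟩ : ∃ v x, w = v ++ [x] :=
        ⟨w.dropLast, w.getLast hne, (List.dropLast_append_getLast hne).symm⟩
      rw [luk_append] at hw
      obtain ⟨m, hmx, hx, hv⟩ := hw
      refine ⟨m, by omega, v, (ih m v).2 hv, ?_⟩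
      have : (k:ℤ) - m = x := by omega
      rw [this]

lemma card_biUnion_append (F : ℕ → Finset (List ℤ)) (K : ℤ) (r : ℕ) :
    ((Finset.range r).biUnion fun m => (F m).image fun w => w ++ [K - m]).card
      = ∑ m ∈ Finset.range r, (F m).card := by
  rw [Finset.card_biUnion]
  · exact Finset.sum_congr rfl fun m _ =>
      Finset.card_image_of_injective _ (List.append_left_injective _)
  · intro m₁ h₁ m₂ h₂ hne
    simp only [Finset.disjoint_left, Finset.mem_image]
    rintro w ⟨v₁, -, rfl⟩ ⟨v₂, -, he⟩
    have h1 : (v₂ ++ [K - (m₂:ℤ)]).getLast? = some (K - m₂) := List.getLast?_concat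
    rw [he, List.getLast?_concat] at h1
    rw [Option.some.injEq] at h1
    have : (m₁ : ℤ) = m₂ := by omega
    exact hne (by exact_mod_cast this)

lemma card_LukF_succ (n k : ℕ) :
    (LukF (n+1) k).card = ∑ m ∈ Finset.range (k+2), (LukF n m).card := by
  show ((Finset.range (k+2)).biUnion fun m => (LukF n m).image fun w => w ++ [(k:ℤ) - m]).card = _
  exact card_biUnion_append _ _ _

lemma sum_card_LukF (n t : ℕ) :
    ∑ m ∈ Finset.range (t+1), (LukF n m).card = T n t := by
  induction n generalizing t with
  | zero =>
    have h : ∀ m, (LukF 0 m).card = if m = 0 then 1 else 0 := by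
      intro m; rcases Nat.eq_zero_or_pos m with rfl | hm
      · rw [show LukF 0 0 = {([] : List ℤ)} from by simp [LukF]]; simp
      · rw [show LukF 0 m = ∅ from by simp [LukF]; omega, if_neg (by omega : ¬ m = 0)]; simp
    rw [Finset.sum_congr rfl fun m _ => h m]
    rw [Finset.sum_ite_eq' (Finset.range (t+1)) 0 (fun _ => 1)]
    simp [T]
  | succ n ih =>
    calc ∑ m ∈ Finset.range (t+1), (LukF (n+1) m).card
        = ∑ m ∈ Finset.range (t+1), ∑ j ∈ Finset.range (m+2), (LukF n j).card :=
          Finset.sum_congr rfl fun m _ => card_LukF_succ n m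
      _ = ∑ m ∈ Finset.range (t+1), T n (m+1) :=
          Finset.sum_congr rfl fun m _ => ih (m+1)
      _ = T (n+1) t := rfl

theorem partialLuk_lastUp_count (n k : ℕ) (hn : 1 ≤ n) (hk : 1 ≤ k) :
    (n + k - 1) * Nat.card {w : List ℤ // IsPartialLuk w n k ∧ LastStepUp w} =
      k * Nat.choose (2 * n + k - 3) (n - 1) := by
  obtain ⟨n', rfl⟩ : ∃ n', n = n'+1 := ⟨n-1, by omega⟩
  obtain ⟨k', rfl⟩ : ∃ k', k = k'+1 := ⟨k-1, by omega⟩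
  have hset : ∀ w : List ℤ, (IsPartialLuk w (n'+1) (k'+1) ∧ LastStepUp w) ↔
      w ∈ (Finset.range (k'+1)).biUnion
        fun m => (LukF n' m).image fun w => w ++ [((k'+1 : ℕ):ℤ) - m] := by
    intro w
    simp only [Finset.mem_biUnion, Finset.mem_range, Finset.mem_image]
    constructor
    · rintro ⟨hp, x, hx, hx1⟩
      obtain ⟨v, rfl⟩ : ∃ v, w = v ++ [x] :=
        ⟨w.dropLast, (List.dropLast_append_getLast? x hx).symm⟩
      rw [luk_append] at hp
      obtain ⟨m, hm, -, hv⟩ := hp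
      refine ⟨m, by omega, v, (mem_LukF _ _ _).2 hv, ?_⟩
      have : ((k'+1 : ℕ):ℤ) - m = x := by push_cast; push_cast at hm; omega
      rw [this]
    · rintro ⟨m, hm, v, hv, rfl⟩
      refine ⟨?_, ((k'+1 : ℕ):ℤ) - m, List.getLast?_concat, by push_cast; omega⟩
      rw [luk_append]
      exact ⟨m, by push_cast; ring, by push_cast; omega, (mem_LukF _ _ _).1 hv⟩
  rw [Nat.card_congr (Equiv.subtypeEquivRight hset), Nat.card_eq_finsetCard,
    card_biUnion_append (LukF n') ((k'+1 : ℕ):ℤ) (k'+1), sum_card_LukF n' k']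
  rw [show n'+1+(k'+1)-1 = n'+k'+1 by omega, show 2*(n'+1)+(k'+1)-3 = 2*n'+k' by omega,
    show n'+1-1 = n' by omega]
  exact T_mul n' k'
end

section
/- For all n ≥ 1 and k ≥ 0, the number of partial Łukasiewicz paths of length n ending at height k equals the number of (k+2)-tuples (L_1, …, L_{k+2}) of Łukasiewicz paths whose lengths sum to n−1 (this is the coefficient identity [u^k]Total(z,u) = [k=0] + z·L(z)^{k+2}, where L(z) is the Catalan generating function). -/
/-- A Łukasiewicz path: a list of integer steps, each `≥ -1`,
with all partial sums `≥ 0` and total sum `0`. -/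
def IsLuk (w : List ℤ) : Prop :=
  (∀ x ∈ w, -1 ≤ x) ∧ (∀ i, 0 ≤ (w.take i).sum) ∧ w.sum = 0

/-- merge two Łukasiewicz paths into one nonempty one -/
def Psi (L1 L2 : List ℤ) : List ℤ :=
  match L2 with
  | [] => 0 :: L1
  | b :: M => (b + 1) :: (L1 ++ (-1) :: M)

/-- a list of `m` Łukasiewicz paths of total length `ℓ` -/
def LukList (Ls : List (List ℤ)) (m ℓ : ℕ) : Prop :=
  Ls.length = m ∧ (∀ w ∈ Ls, IsLuk w) ∧ (Ls.map List.length).sum = ℓ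

/-- merge two Łukasiewicz paths into one nonempty one -/
lemma isLuk_nil : IsLuk [] := ⟨by simp, by simp, rfl⟩

lemma psi_ne_nil (L1 L2 : List ℤ) : Psi L1 L2 ≠ [] := by
  cases L2 <;> simp [Psi]

lemma psi_length (L1 L2 : List ℤ) :
    (Psi L1 L2).length = L1.length + L2.length + 1 := by
  cases L2 <;> simp [Psi] <;> omega

lemma sum_take_drop (v : List ℤ) (s i : ℕ) :
    ((v.drop s).take i).sum = (v.take (s + i)).sum - (v.take s).sum := by
  rw [List.take_add]; simp

lemma isLuk_psi {L1 L2 : List ℤ} (h1 : IsLuk L1) (h2 : IsLuk L2) :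
    IsLuk (Psi L1 L2) := by
  obtain ⟨m1, p1, s1⟩ := h1
  obtain ⟨m2, p2, s2⟩ := h2
  cases L2 with
  | nil =>
    refine ⟨?_, ?_, by simp [Psi, s1]⟩
    · intro x hx
      simp [Psi] at hx
      rcases hx with h | h
      · omega
      · exact m1 x h
    · intro i
      cases i with
      | zero => simp
      | succ i => simpa [Psi] using p1 i
  | cons b M =>
    have hb : 0 ≤ b := by simpa using p2 1
    refine ⟨?_, ?_, ?_⟩
    · intro x hx
      simp [Psi] at hx
      rcases hx with h | h | h | h
      · omega
      · exact m1 x h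
      · omega
      · exact m2 x (by simp [h])
    · intro i
      cases i with
      | zero => simp
      | succ i =>
        simp only [Psi, List.take_succ_cons, List.sum_cons]
        rcases le_or_gt i L1.length with hi | hi
        · rw [List.take_append_of_le_length hi]
          have := p1 i
          omega
        · obtain ⟨j, rfl⟩ : ∃ j, i = L1.length + (j + 1) := ⟨i - L1.length - 1, by omega⟩
          rw [List.take_append]
          simp only [List.take_of_length_le (Nat.le_add_right L1.length (j + 1)),
            Nat.add_sub_cancel_left, List.take_succ_cons, List.sum_append, List.sum_cons, s1]
          have h2j := p2 (j + 1)
          simp only [List.take_succ_cons, List.sum_cons] at h2j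
          omega
    · simp only [Psi, List.sum_cons, List.sum_append, List.sum_cons, s1]
      simp only [List.sum_cons] at s2
      omega

/-- key split lemma: every nonempty Łuk path is Psi of a unique pair -/
lemma psi_surj {w : List ℤ} (hw : IsLuk w) (hne : w ≠ []) :
    ∃ L1 L2, IsLuk L1 ∧ IsLuk L2 ∧ Psi L1 L2 = w ∧
      L1.length + L2.length + 1 = w.length := by
  obtain ⟨a, v, rfl⟩ : ∃ a v, w = a :: v := by
    cases w with
    | nil => exact absurd rfl hne
    | cons a v => exact ⟨a, v, rfl⟩
  obtain ⟨mw, pw, sw⟩ := hw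
  have ha : 0 ≤ a := by simpa using pw 1
  have hpv : ∀ i, 0 ≤ a + (v.take i).sum := by
    intro i
    have := pw (i + 1)
    simpa using this
  have hsv : a + v.sum = 0 := by simpa using sw
  rcases eq_or_lt_of_le ha with h0 | hpos
  · -- a = 0
    refine ⟨v, [], ⟨?_, ?_, by omega⟩, isLuk_nil, ?_, by simp⟩
    · exact fun x hx => mw x (by simp [hx])
    · intro i; have := hpv i; omega
    · simp [Psi, ← h0]
  · -- a ≥ 1
    have hex : ∃ s, (v.take s).sum < 0 := ⟨v.length, by simp; omega⟩
    classical
    set s₀ := Nat.find hex with hs₀def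
    have hs₀ : (v.take s₀).sum < 0 := Nat.find_spec hex
    have hmin : ∀ t < s₀, 0 ≤ (v.take t).sum := by
      intro t ht
      have := Nat.find_min hex ht
      omega
    have hs₀pos : 1 ≤ s₀ := by
      by_contra h
      have : s₀ = 0 := by omega
      rw [this] at hs₀; simp at hs₀
    have hs₀le : s₀ ≤ v.length := by
      by_contra h
      push_neg at h
      have h1 : (v.take s₀).sum = v.sum := by rw [List.take_of_length_le (by omega)]
      have h2 : (v.take v.length).sum = v.sum := by simp
      have := hmin v.length (by omega)
      omega
    clear_value s₀
    obtain ⟨t, rfl⟩ : ∃ t, s₀ = t + 1 := ⟨s₀ - 1, by omega⟩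
    have htlt : t < v.length := by omega
    have hstep : (v.take (t+1)).sum = (v.take t).sum + v[t] := List.sum_take_succ v t htlt
    have hvt1 : -1 ≤ v[t] := mw _ (by simp [List.getElem_mem])
    have ht0 : 0 ≤ (v.take t).sum := hmin t (by omega)
    have hkey : (v.take t).sum = 0 ∧ v[t] = -1 := by constructor <;> omega
    have htake1 : (v.take (t+1)).sum = -1 := by omega
    refine ⟨v.take t, (a - 1) :: v.drop (t+1), ⟨?_, ?_, hkey.1⟩, ⟨?_, ?_, ?_⟩, ?_, ?_⟩
    · exact fun x hx => mw x (by simp [List.mem_of_mem_take hx])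
    · intro i
      rw [List.take_take]
      exact hmin _ (by omega)
    · intro x hx
      simp at hx
      rcases hx with h | h
      · omega
      · exact mw x (by simp [List.mem_of_mem_drop h])
    · intro i
      cases i with
      | zero => simp
      | succ i =>
        simp only [List.take_succ_cons, List.sum_cons]
        rw [sum_take_drop]
        have := hpv (t + 1 + i)
        omega
    · simp only [List.sum_cons]
      have : (v.take (t+1)).sum + (v.drop (t+1)).sum = v.sum := by
        have := congrArg List.sum (List.take_append_drop (t+1) v)
        simpa using this
      omega
    · simp only [Psi]
      have : a - 1 + 1 = a := by ring
      rw [this]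
      congr 1
      rw [← hkey.2, ← List.drop_eq_getElem_cons htlt, List.take_append_drop]
    · simp
      omega

lemma psi_inj {L1 L2 L1' L2' : List ℤ} (h1 : IsLuk L1) (h2 : IsLuk L2)
    (h1' : IsLuk L1') (h2' : IsLuk L2') (h : Psi L1 L2 = Psi L1' L2') :
    L1 = L1' ∧ L2 = L2' := by
  have key : ∀ (A B : List ℤ) (M M' : List ℤ), IsLuk A → IsLuk B →
      A ++ (-1) :: M = B ++ (-1) :: M' → A.length ≤ B.length → A = B := by
    intro A B M M' hA hB hAB hlen
    rcases eq_or_lt_of_le hlen with he | hlt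
    · exact (List.append_inj hAB (by
        have := congrArg List.length hAB
        simpa using he)).1
    · exfalso
      have e1 : (B ++ (-1) :: M').take (A.length + 1) = B.take (A.length + 1) :=
        List.take_append_of_le_length (by omega)
      have e2 : (A ++ (-1) :: M).take (A.length + 1) = A ++ [(-1:ℤ)] := by
        rw [show A ++ (-1) :: M = (A ++ [(-1:ℤ)]) ++ M by simp,
          List.take_append_of_le_length (by simp)]
        simp [List.take_of_length_le]
      have hBtake : B.take (A.length + 1) = A ++ [(-1 : ℤ)] := by
        rw [← e1, ← hAB, e2]
      have := hB.2.1 (A.length + 1)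
      rw [hBtake] at this
      simp [hA.2.2] at this
  cases L2 with
  | nil =>
    cases L2' with
    | nil => simp_all [Psi]
    | cons b' M' =>
      have hb' : 0 ≤ b' := by simpa using h2'.2.1 1
      simp [Psi] at h
      omega
  | cons b M =>
    cases L2' with
    | nil =>
      have hb : 0 ≤ b := by simpa using h2.2.1 1
      simp [Psi] at h
      omega
    | cons b' M' =>
      simp only [Psi, List.cons.injEq] at h
      obtain ⟨hbb, htail⟩ := h
      have hbb' : b = b' := by omega
      have hL : L1 = L1' := by
        rcases le_total L1.length L1'.length with hl | hl
        · exact key L1 L1' M M' h1 h1' htail hl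
        · exact (key L1' L1 M' M h1' h1 htail.symm hl).symm
      subst hL hbb'
      have := (List.append_cancel_left htail)
      simp at this
      simp [this]

lemma append_last_mem {n k : ℕ} (j : Fin (k + 2)) (v : List ℤ)
    (hv : IsPartialLuk v n (j : ℕ)) :
    IsPartialLuk (v ++ [(k : ℤ) - ((j : ℕ) : ℤ)]) (n + 1) k := by
  obtain ⟨hlen, hmem, htake, hsum⟩ := hv
  have hj : (j : ℕ) < k + 2 := j.isLt
  refine ⟨by simp [hlen], ?_, ?_, by simp [hsum]⟩
  · intro x hx
    simp at hx
    rcases hx with h | h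
    · exact hmem x h
    · rw [h]
      have : ((j : ℕ) : ℤ) ≤ (k : ℤ) + 1 := by exact_mod_cast by omega
      omega
  · intro i
    rcases le_or_gt i n with hi | hi
    · rw [List.take_append_of_le_length (by omega)]
      exact htake i
    · rw [List.take_of_length_le (by simp [hlen]; omega)]
      simp [hsum]

noncomputable def pathEquiv (n k : ℕ) :
    {w : List ℤ // IsPartialLuk w (n + 1) k} ≃
      Σ j : Fin (k + 2), {w : List ℤ // IsPartialLuk w n (j : ℕ)} := by
  refine (Equiv.ofBijective
    (fun p : (Σ j : Fin (k + 2), {w : List ℤ // IsPartialLuk w n (j : ℕ)}) =>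
      (⟨p.2.val ++ [(k : ℤ) - ((p.1 : ℕ) : ℤ)], append_last_mem p.1 p.2.val p.2.2⟩ :
        {w : List ℤ // IsPartialLuk w (n + 1) k}))
    ⟨?_, ?_⟩).symm
  · rintro ⟨j, v, hv⟩ ⟨j', v', hv'⟩ h
    simp only [Subtype.mk.injEq] at h
    obtain ⟨h1, h2⟩ := List.append_inj h (by rw [hv.1, hv'.1])
    simp only [List.cons.injEq] at h2
    have hjj : ((j : ℕ) : ℤ) = ((j' : ℕ) : ℤ) := by omega
    have : (j : ℕ) = (j' : ℕ) := by exact_mod_cast hjj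
    have hj : j = j' := Fin.ext this
    subst hj
    subst h1
    rfl
  · rintro ⟨w, hw⟩
    obtain ⟨hlen, hmem, htake, hsum⟩ := hw
    have hn : n < w.length := by omega
    have hw : w = w.take n ++ [w[n]] := by
      conv_lhs => rw [← List.take_append_drop n w]
      congr 1
      rw [List.drop_eq_getElem_cons hn]
      have : w.drop (n + 1) = [] := by
        apply List.eq_nil_of_length_eq_zero
        simp [hlen]
      rw [this]
    have hsum' : (w.take n).sum + w[n] = (k : ℤ) := by
      have h := List.sum_take_succ w n hn
      rw [List.take_of_length_le (le_of_eq hlen)] at h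
      omega
    have h0 : 0 ≤ (w.take n).sum := htake n
    have hwn : -1 ≤ w[n] := hmem _ (List.getElem_mem hn)
    have hjlt : ((w.take n).sum).toNat < k + 2 := by omega
    refine ⟨⟨⟨((w.take n).sum).toNat, hjlt⟩, ⟨w.take n, ?_, ?_, ?_, ?_⟩⟩, ?_⟩
    · simp; omega
    · exact fun x hx => hmem x (List.mem_of_mem_take hx)
    · intro i
      rw [List.take_take]
      exact htake _
    · simp; omega
    · apply Subtype.ext
      show w.take n ++ [(k : ℤ) - ((((w.take n).sum).toNat : ℕ) : ℤ)] = w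
      have he : (k : ℤ) - ((((w.take n).sum).toNat : ℕ) : ℤ) = w[n] := by
        push_cast
        omega
      rw [he, ← hw]

noncomputable def tupEquiv (m ℓ : ℕ) :
    {L : Fin m → List ℤ // (∀ i, IsLuk (L i)) ∧ (∑ i, (L i).length) = ℓ} ≃
      {Ls : List (List ℤ) // Ls.length = m ∧ (∀ w ∈ Ls, IsLuk w) ∧
        (Ls.map List.length).sum = ℓ} := by
  refine Equiv.ofBijective (fun p => ⟨List.ofFn p.val, by simp, ?_, ?_⟩) ⟨?_, ?_⟩
  · intro w hw
    rw [List.mem_ofFn] at hw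
    obtain ⟨i, rfl⟩ := hw
    exact p.2.1 i
  · rw [List.map_ofFn, List.sum_ofFn]
    exact p.2.2
  · rintro ⟨L, hL⟩ ⟨L', hL'⟩ h
    simp only [Subtype.mk.injEq] at h
    exact Subtype.ext (List.ofFn_injective h)
  · rintro ⟨Ls, hlen, hluk, hsum⟩
    subst hlen
    refine ⟨⟨fun i => Ls[(i : ℕ)], ?_, ?_⟩, ?_⟩
    · exact fun i => hluk _ (List.getElem_mem _)
    · rw [← List.sum_ofFn, List.ofFn_getElem_eq_map]
      exact hsum
    · exact Subtype.ext (List.ofFn_getElem (xs := Ls))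

lemma lsdecomp {Ms : List (List ℤ)} {j : ℕ} (h : Ms.length = j + 2) :
    Ms = Ms.take j ++ [Ms.getD j [], Ms.getD (j + 1) []] := by
  conv_lhs => rw [← List.take_append_drop j Ms]
  congr 1
  rw [List.drop_eq_getElem_cons (by omega), List.drop_eq_getElem_cons (by omega)]
  have h2 : Ms.drop (j + 1 + 1) = [] := by
    apply List.eq_nil_of_length_eq_zero
    simp [h]
  rw [h2, List.getD_eq_getElem _ _ (by omega), List.getD_eq_getElem _ _ (by omega)]

/-- the merge map -/
def mergeLs (k : ℕ) (j : ℕ) (Ms : List (List ℤ)) : List (List ℤ) :=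
  Ms.take j ++ Psi (Ms.getD j []) (Ms.getD (j + 1) []) :: List.replicate (k + 1 - j) []

lemma mergeLs_take {k j : ℕ} (Ms : List (List ℤ)) (h : Ms.length = j + 2) :
    (mergeLs k j Ms).take j = Ms.take j := by
  rw [mergeLs, List.take_append_of_le_length (by simp [h])]
  simp

lemma length_take_eq {Ms : List (List ℤ)} {j : ℕ} (h : Ms.length = j + 2) :
    (Ms.take j).length = j := by simp [h]

lemma mergeLs_getD_self {k j : ℕ} (Ms : List (List ℤ)) (h : Ms.length = j + 2)
    (hj : j < k + 2) :
    (mergeLs k j Ms).getD j [] = Psi (Ms.getD j []) (Ms.getD (j + 1) []) := by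
  rw [mergeLs, List.getD_eq_getElem _ _ (by simp [h]),
    List.getElem_append_right (by simp [h])]
  simp [h]

lemma mergeLs_getD_gt {k j : ℕ} (Ms : List (List ℤ)) (h : Ms.length = j + 2)
    {i : ℕ} (hji : j < i) (hik : i < k + 2) :
    (mergeLs k j Ms).getD i [] = [] := by
  have hlt : (Ms.take j).length = j := length_take_eq h
  rw [mergeLs, List.getD_eq_getElem _ _ (by simp [h]; omega), List.getElem_append_right (by omega)]
  obtain ⟨d, hd⟩ : ∃ d, i - (Ms.take j).length = d + 1 := ⟨i - j - 1, by omega⟩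
  simp only [hd, List.getElem_cons_succ, List.getElem_replicate]

lemma mergeLs_spec {k ℓ : ℕ} (j : ℕ) (hj : j < k + 2) (Ms : List (List ℤ))
    (hMs : LukList Ms (j + 2) ℓ) : LukList (mergeLs k j Ms) (k + 2) (ℓ + 1) := by
  obtain ⟨hlen, hluk, hsum⟩ := hMs
  have hd1 : Ms.getD j [] ∈ Ms := by
    rw [List.getD_eq_getElem _ _ (by omega)]; exact List.getElem_mem _
  have hd2 : Ms.getD (j + 1) [] ∈ Ms := by
    rw [List.getD_eq_getElem _ _ (by omega)]; exact List.getElem_mem _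
  refine ⟨?_, ?_, ?_⟩
  · simp [mergeLs, hlen]
    omega
  · intro w hw
    rw [mergeLs, List.mem_append, List.mem_cons] at hw
    rcases hw with h | h | h
    · exact hluk w (List.mem_of_mem_take h)
    · rw [h]; exact isLuk_psi (hluk _ hd1) (hluk _ hd2)
    · rw [List.eq_of_mem_replicate h]; exact isLuk_nil
  · have hdec := congrArg (fun l => (List.map List.length l).sum) (lsdecomp hlen)
    simp only [List.map_append, List.sum_append, List.map_cons, List.sum_cons,
      List.map_nil, List.sum_nil] at hdec
    rw [hsum] at hdec
    simp only [mergeLs, List.map_append, List.sum_append, List.map_cons, List.sum_cons]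
    rw [psi_length]
    have : (List.map List.length (List.replicate (k + 1 - j) ([] : List ℤ))).sum = 0 := by
      simp
    rw [this]
    omega

noncomputable def recEquiv (k ℓ : ℕ) :
    {Ls : List (List ℤ) // LukList Ls (k + 2) (ℓ + 1)} ≃
      Σ j : Fin (k + 2), {Ms : List (List ℤ) // LukList Ms ((j : ℕ) + 2) ℓ} := by
  refine (Equiv.ofBijective
    (fun p : (Σ j : Fin (k + 2), {Ms : List (List ℤ) // LukList Ms ((j : ℕ) + 2) ℓ}) =>
      (⟨mergeLs k p.1 p.2.val, mergeLs_spec p.1 p.1.isLt p.2.val p.2.2⟩ :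
        {Ls : List (List ℤ) // LukList Ls (k + 2) (ℓ + 1)}))
    ⟨?_, ?_⟩).symm
  · rintro ⟨j, Ms, hMs⟩ ⟨j', Ms', hMs'⟩ h
    simp only [Subtype.mk.injEq] at h
    -- first: j = j'
    have hjj : (j : ℕ) = (j' : ℕ) := by
      by_contra hne
      rcases Nat.lt_or_ge (j : ℕ) (j' : ℕ) with hlt | hge
      · have h1 := mergeLs_getD_gt Ms hMs.1 hlt j'.isLt
        have h2 := mergeLs_getD_self Ms' hMs'.1 j'.isLt
        rw [h] at h1
        rw [h1] at h2
        exact psi_ne_nil _ _ h2.symm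
      · have hlt' : (j' : ℕ) < (j : ℕ) := by omega
        have h1 := mergeLs_getD_gt Ms' hMs'.1 hlt' j.isLt
        have h2 := mergeLs_getD_self Ms hMs.1 j.isLt
        rw [← h] at h1
        rw [h1] at h2
        exact psi_ne_nil _ _ h2.symm
    have hj : j = j' := Fin.ext hjj
    subst hj
    -- now equality of the two merges
    simp only [mergeLs] at h
    obtain ⟨hA, hB⟩ := List.append_inj h
      (by rw [length_take_eq hMs.1, length_take_eq hMs'.1])
    simp only [List.cons.injEq] at hB
    have hluk1 := hMs.2.1
    have hluk1' := hMs'.2.1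
    have m1 : Ms.getD (j : ℕ) [] ∈ Ms := by
      rw [List.getD_eq_getElem _ _ (by rw [hMs.1]; omega)]; exact List.getElem_mem _
    have m2 : Ms.getD ((j : ℕ) + 1) [] ∈ Ms := by
      rw [List.getD_eq_getElem _ _ (by rw [hMs.1]; omega)]; exact List.getElem_mem _
    have m1' : Ms'.getD (j : ℕ) [] ∈ Ms' := by
      rw [List.getD_eq_getElem _ _ (by rw [hMs'.1]; omega)]; exact List.getElem_mem _
    have m2' : Ms'.getD ((j : ℕ) + 1) [] ∈ Ms' := by
      rw [List.getD_eq_getElem _ _ (by rw [hMs'.1]; omega)]; exact List.getElem_mem _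
    obtain ⟨e1, e2⟩ := psi_inj (hluk1 _ m1) (hluk1 _ m2) (hluk1' _ m1') (hluk1' _ m2') hB.1
    have : Ms = Ms' := by
      rw [lsdecomp hMs.1, lsdecomp hMs'.1, hA, e1, e2]
    subst this
    rfl
  · rintro ⟨Ls, hlen, hluk, hsum⟩
    -- find the greatest nonempty index
    have hne : ∃ i, ∃ h : i < Ls.length, Ls[i] ≠ [] := by
      by_contra hc
      push_neg at hc
      have : ∀ w ∈ Ls, w = [] := by
        intro w hw
        obtain ⟨i, hi, rfl⟩ := List.mem_iff_getElem.1 hw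
        exact hc i hi
      have : (Ls.map List.length).sum = 0 := by
        rw [List.sum_eq_zero_iff]
        intro x hx
        simp at hx
        obtain ⟨w, hw, rfl⟩ := hx
        rw [this w hw]
        rfl
      omega
    classical
    set P : ℕ → Prop := fun i => Ls.getD i [] ≠ [] with hP
    have : DecidablePred P := fun i => by rw [hP]; infer_instance
    obtain ⟨i₀, hi₀, hne₀⟩ := hne
    set j₀ := Nat.findGreatest P (k + 1) with hj₀
    have hPi₀ : P i₀ := by
      show Ls.getD i₀ [] ≠ []
      rw [List.getD_eq_getElem _ _ hi₀]
      exact hne₀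
    have hi₀le : i₀ ≤ k + 1 := by
      have := hi₀
      omega
    have hPj₀ : P j₀ := Nat.findGreatest_spec hi₀le hPi₀
    have hj₀le : j₀ ≤ k + 1 := Nat.findGreatest_le _
    have hj₀lt : j₀ < k + 2 := by omega
    have hmax : ∀ i, j₀ < i → i < k + 2 → Ls.getD i [] = [] := by
      intro i h1 h2
      by_contra hc
      exact (Nat.findGreatest_is_greatest h1 (by omega)) hc
    have hwj_mem : Ls.getD j₀ [] ∈ Ls := by
      rw [List.getD_eq_getElem _ _ (by omega)]
      exact List.getElem_mem _
    obtain ⟨L1, L2, hL1, hL2, hPsi, hlen2⟩ := psi_surj (hluk _ hwj_mem) hPj₀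
    -- tail of Ls is all empty lists
    have hdropLs : Ls.drop (j₀ + 1) = List.replicate (k + 1 - j₀) [] := by
      rw [List.eq_replicate_iff]
      constructor
      · simp [hlen]
      · intro b hb
        obtain ⟨d, hd, hbd⟩ := List.mem_iff_getElem.1 hb
        have hdd : (Ls.drop (j₀ + 1))[d] = Ls[j₀ + 1 + d]'(by
          have := hd; simp at this; omega) := List.getElem_drop
        have hlt2 : j₀ + 1 + d < k + 2 := by
          have := hd; simp [hlen] at this ⊢; omega
        rw [← hbd, hdd, ← List.getD_eq_getElem Ls [] (by omega)]
        exact hmax _ (by omega) hlt2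
    have hLsdec : Ls = Ls.take j₀ ++ Ls.getD j₀ [] :: Ls.drop (j₀ + 1) := by
      conv_lhs => rw [← List.take_append_drop j₀ Ls]
      congr 1
      rw [List.drop_eq_getElem_cons (by omega), List.getD_eq_getElem _ _ (by omega)]
    -- sum computation
    have hsum2 : ((Ls.take j₀).map List.length).sum
        + (Ls.getD j₀ []).length + ((Ls.drop (j₀ + 1)).map List.length).sum = ℓ + 1 := by
      have := congrArg (fun l => (List.map List.length l).sum) hLsdec
      simp only [List.map_append, List.sum_append, List.map_cons, List.sum_cons] at this
      rw [hsum] at this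
      omega
    have hdropsum : ((Ls.drop (j₀ + 1)).map List.length).sum = 0 := by
      rw [hdropLs]
      simp
    refine ⟨⟨⟨j₀, hj₀lt⟩, ⟨Ls.take j₀ ++ [L1, L2], ?_, ?_, ?_⟩⟩, ?_⟩
    · simp [hlen]
      omega
    · intro w hw
      simp at hw
      rcases hw with h | h | h
      · exact hluk w (List.mem_of_mem_take h)
      · rw [h]; exact hL1
      · rw [h]; exact hL2
    · simp only [List.map_append, List.sum_append, List.map_cons, List.sum_cons,
        List.map_nil, List.sum_nil]
      omega
    · apply Subtype.ext
      show mergeLs k j₀ (Ls.take j₀ ++ [L1, L2]) = Ls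
      have htklen : (Ls.take j₀).length = j₀ := by simp [hlen]; omega
      have e0 : (Ls.take j₀ ++ [L1, L2]).take j₀ = Ls.take j₀ := by
        rw [List.take_append_of_le_length (by omega), List.take_take]
        simp
      have e1 : (Ls.take j₀ ++ [L1, L2]).getD j₀ [] = L1 := by
        rw [List.getD_eq_getElem _ _ (by simp [htklen]),
          List.getElem_append_right (le_of_eq htklen)]
        simp [htklen]
      have e2 : (Ls.take j₀ ++ [L1, L2]).getD (j₀ + 1) [] = L2 := by
        rw [List.getD_eq_getElem _ _ (by simp [htklen]),
          List.getElem_append_right (by omega)]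
        simp [htklen]
      rw [mergeLs, e0, e1, e2, hPsi, ← hdropLs, ← hLsdec]

-- finiteness
lemma finPartial : ∀ n k, Finite {w : List ℤ // IsPartialLuk w n k} := by
  intro n
  induction n with
  | zero =>
    intro k
    have : Subsingleton {w : List ℤ // IsPartialLuk w 0 k} := by
      constructor
      rintro ⟨a, ha⟩ ⟨b, hb⟩
      have ha' := List.eq_nil_of_length_eq_zero ha.1
      have hb' := List.eq_nil_of_length_eq_zero hb.1
      subst ha' hb'
      rfl
    exact Finite.of_subsingleton
  | succ n ih =>
    intro k
    haveI := fun j : Fin (k + 2) => ih (j : ℕ)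
    exact Finite.of_equiv _ (pathEquiv n k).symm

lemma lukList_zero {Ls : List (List ℤ)} {m : ℕ} (h : LukList Ls m 0) :
    Ls = List.replicate m [] := by
  obtain ⟨hlen, _, hsum⟩ := h
  rw [List.eq_replicate_iff]
  refine ⟨hlen, fun b hb => ?_⟩
  apply List.eq_nil_of_length_eq_zero
  exact List.sum_eq_zero_iff.1 hsum _ (List.mem_map_of_mem hb)

lemma finLuk : ∀ ℓ k, Finite {Ls : List (List ℤ) // LukList Ls (k + 2) ℓ} := by
  intro ℓ
  induction ℓ with
  | zero =>
    intro k
    have : Subsingleton {Ls : List (List ℤ) // LukList Ls (k + 2) 0} := by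
      constructor
      rintro ⟨a, ha⟩ ⟨b, hb⟩
      simp [Subtype.ext_iff, lukList_zero ha, lukList_zero hb]
    exact Finite.of_subsingleton
  | succ ℓ ih =>
    intro k
    haveI := fun j : Fin (k + 2) => ih (j : ℕ)
    exact Finite.of_equiv _ (recEquiv k ℓ).symm

-- base case cards
lemma card_one_path (k : ℕ) : Nat.card {w : List ℤ // IsPartialLuk w 1 k} = 1 := by
  rw [Nat.card_eq_one_iff_unique]
  constructor
  · constructor
    rintro ⟨a, ha⟩ ⟨b, hb⟩
    obtain ⟨x, rfl⟩ := List.length_eq_one_iff.1 ha.1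
    obtain ⟨y, rfl⟩ := List.length_eq_one_iff.1 hb.1
    have hx : x = (k : ℤ) := by simpa using ha.2.2.2
    have hy : y = (k : ℤ) := by simpa using hb.2.2.2
    simp [hx, hy]
  · refine ⟨[(k : ℤ)], rfl, ?_, ?_, by simp⟩
    · intro x hx
      simp at hx
      simp [hx]
    · intro i
      cases i with
      | zero => simp
      | succ i => simp
  
lemma card_lukList_zero (k : ℕ) :
    Nat.card {Ls : List (List ℤ) // LukList Ls (k + 2) 0} = 1 := by
  rw [Nat.card_eq_one_iff_unique]
  constructor
  · constructor
    rintro ⟨a, ha⟩ ⟨b, hb⟩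
    simp [Subtype.ext_iff, lukList_zero ha, lukList_zero hb]
  · refine ⟨List.replicate (k + 2) [], by simp, ?_, ?_⟩
    · intro w hw
      rw [List.eq_of_mem_replicate hw]
      exact isLuk_nil
    · simp

lemma card_sigma_fin {m : ℕ} (T : Fin m → Type) [∀ i, Finite (T i)] :
    Nat.card (Σ i, T i) = ∑ i, Nat.card (T i) := by
  haveI := fun i => Fintype.ofFinite (T i)
  simp [Nat.card_eq_fintype_card, Fintype.card_sigma]

lemma key : ∀ n k, Nat.card {w : List ℤ // IsPartialLuk w (n + 1) k} =
    Nat.card {Ls : List (List ℤ) // LukList Ls (k + 2) n} := by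
  intro n
  induction n with
  | zero => intro k; rw [card_one_path, card_lukList_zero]
  | succ n ih =>
    intro k
    haveI := fun j : Fin (k + 2) => finPartial (n + 1) (j : ℕ)
    haveI := fun j : Fin (k + 2) => finLuk n (j : ℕ)
    rw [Nat.card_congr (pathEquiv (n + 1) k), Nat.card_congr (recEquiv k n),
      card_sigma_fin, card_sigma_fin]
    exact Finset.sum_congr rfl fun j _ => ih (j : ℕ)

theorem partialLuk_count_eq_tuples (n k : ℕ) (hn : 1 ≤ n) :
    Nat.card {w : List ℤ // IsPartialLuk w n k} =
      Nat.card {L : Fin (k + 2) → List ℤ //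
        (∀ i, IsLuk (L i)) ∧ (∑ i, (L i).length) = n - 1} := by
  obtain ⟨m, rfl⟩ : ∃ m, n = m + 1 := ⟨n - 1, by omega⟩
  rw [Nat.card_congr (tupEquiv (k + 2) (m + 1 - 1))]
  have : m + 1 - 1 = m := rfl
  rw [this]
  exact key m k
end

section
/- For all n ≥ 1 and 0 ≤ k ≤ n, the number A(n,k) of right-to-left partial Łukasiewicz paths of length n ending at height k satisfies (n+1) · A(n,k) = (k+1) · C(2n−k, n). -/
open Finset

/-- A right-to-left partial Łukasiewicz path of length `n` ending at height `k`:
a list of `n` integer steps, each `≤ 1`, with all partial sums `≥ 0`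
and total sum `k`. -/
def IsRLPartialLuk (w : List ℤ) (n k : ℕ) : Prop :=
  w.length = n ∧ (∀ x ∈ w, x ≤ 1) ∧ (∀ i, 0 ≤ (w.take i).sum) ∧ w.sum = k

/-- Explicit finset of such paths, built by last step. -/
def lukF : ℕ → ℕ → Finset (List ℤ)
  | 0, k => if k = 0 then {([] : List ℤ)} else ∅
  | n+1, k => (Finset.Icc (k-1) n).biUnion fun j =>
      (lukF n j).image (fun v => v ++ [(k : ℤ) - (j : ℤ)])

lemma mem_lukF : ∀ n k (w : List ℤ), w ∈ lukF n k ↔ IsRLPartialLuk w n k := by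
  intro n
  induction n with
  | zero =>
    intro k w
    constructor
    · intro hw
      by_cases hk : k = 0
      · subst hk
        simp [lukF] at hw
        subst hw
        refine ⟨rfl, by simp, by simp, by simp⟩
      · simp [lukF, hk] at hw
    · rintro ⟨h1, h2, h3, h4⟩
      have : w = [] := List.length_eq_zero_iff.mp h1
      subst this
      simp at h4
      have : k = 0 := by exact_mod_cast h4.symm
      simp [lukF, this]
  | succ n ih =>
    intro k w
    constructor
    · intro hw
      simp only [lukF, Finset.mem_biUnion, Finset.mem_Icc, Finset.mem_image] at hw
      obtain ⟨j, ⟨hj1, hj2⟩, v, hv, rfl⟩ := hw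
      obtain ⟨h1, h2, h3, h4⟩ := (ih j v).mp hv
      have hx : (k : ℤ) - (j : ℤ) ≤ 1 := by
        have : k ≤ j + 1 := by omega
        omega
      refine ⟨by simp [h1], ?_, ?_, ?_⟩
      · intro x hx'
        rcases List.mem_append.mp hx' with h | h
        · exact h2 x h
        · simp at h; omega
      · intro i
        by_cases hi : i ≤ n
        · rw [List.take_append_of_le_length (by omega)]
          exact h3 i
        · rw [List.take_of_length_le (by simp [h1]; omega)]
          simp [h4]
      · simp [h4]
    · rintro ⟨h1, h2, h3, h4⟩
      have hne : w ≠ [] := by intro h; subst h; simp at h1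
      set v := w.dropLast with hv
      set x := w.getLast hne with hx
      have hw : v ++ [x] = w := List.dropLast_append_getLast hne
      have hvlen : v.length = n := by
        simp [hv, h1]
      have hvtake : v = w.take n := by
        rw [hv, List.dropLast_eq_take, h1]
        simp
      have hvsum : 0 ≤ v.sum := by rw [hvtake]; exact h3 n
      set j : ℕ := v.sum.toNat with hj
      have hjz : (j : ℤ) = v.sum := Int.toNat_of_nonneg hvsum
      have hjn : j ≤ n := by
        have := List.sum_le_card_nsmul v 1 (fun y hy => h2 y (by rw [← hw]; exact List.mem_append_left _ hy))
        simp [hvlen] at this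
        omega
      have hxval : x = (k : ℤ) - (j : ℤ) := by
        have : v.sum + x = k := by rw [← h4, ← hw]; simp
        omega
      have hx1 : x ≤ 1 := h2 x (by rw [← hw]; exact List.mem_append_right _ (by simp))
      have hjk : k - 1 ≤ j := by omega
      simp only [lukF, Finset.mem_biUnion, Finset.mem_Icc, Finset.mem_image]
      refine ⟨j, ⟨hjk, hjn⟩, v, (ih j v).mpr ⟨hvlen, ?_, ?_, by omega⟩, by rw [← hxval, hw]⟩
      · exact fun y hy => h2 y (by rw [← hw]; exact List.mem_append_left _ hy)
      · intro i
        rw [hvtake, List.take_take]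
        exact h3 _

lemma lukF_succ (n k : ℕ) : lukF (n+1) k = (Finset.Icc (k-1) n).biUnion fun j =>
    (lukF n j).image (fun v => v ++ [(k : ℤ) - (j : ℤ)]) := rfl

lemma card_lukF_succ (n k : ℕ) :
    (lukF (n+1) k).card = ∑ j ∈ Finset.Icc (k-1) n, (lukF n j).card := by
  rw [lukF_succ, Finset.card_biUnion]
  · refine Finset.sum_congr rfl fun j _ => ?_
    exact Finset.card_image_of_injective _ (fun a b h => List.append_cancel_right h)
  · intro j1 _ j2 _ hne
    rw [Function.onFun, Finset.disjoint_left]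
    rintro w hw1 hw2
    simp only [Finset.mem_image] at hw1 hw2
    obtain ⟨v1, hv1, rfl⟩ := hw1
    obtain ⟨v2, hv2, he⟩ := hw2
    have l1 : v1.length = n := ((mem_lukF n j1 v1).mp hv1).1
    have l2 : v2.length = n := ((mem_lukF n j2 v2).mp hv2).1
    have := (List.append_inj he.symm (by rw [l1, l2])).2
    simp at this
    exact hne (by exact_mod_cast this)

lemma sum_reflect (a n : ℕ) (f : ℕ → ℕ) (ha : a ≤ n) :
    ∑ j ∈ Finset.Icc a n, f (2*n - j) = ∑ m ∈ Finset.Icc n (2*n - a), f m := by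
  refine Finset.sum_nbij' (fun j => 2*n - j) (fun m => 2*n - m) ?_ ?_ ?_ ?_ ?_ <;>
    simp only [Finset.mem_Icc] <;> intros
  · omega
  · omega
  · omega
  · omega
  · trivial

lemma sum_choose_top (a n : ℕ) (ha : a ≤ n) :
    ∑ j ∈ Finset.Icc a n, (2*n - j).choose n = (2*n - a + 1).choose (n+1) := by
  rw [← Nat.sum_Icc_choose]
  exact sum_reflect a n (fun x => x.choose n) ha

lemma sum_choose_top' (a n : ℕ) (ha : a ≤ n) :
    ∑ j ∈ Finset.Icc a n, (2*n - j).choose (n+1) = (2*n - a + 1).choose (n+2) := by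
  refine (sum_reflect a n (fun x => x.choose (n+1)) ha).trans ?_
  have h1 : Finset.Icc n (2*n-a) = insert n (Finset.Icc (n+1) (2*n-a)) := by
    rw [Finset.Icc_add_one_left_eq_Ioc, Finset.Ioc_insert_left (by omega)]
  rw [h1, Finset.sum_insert (by simp), Nat.choose_succ_self, Nat.sum_Icc_choose, zero_add]

lemma card_lukF : ∀ n k, k ≤ n →
    ((lukF n k).card : ℤ) = (2*n - k).choose n - (2*n - k).choose (n+1) := by
  intro n
  induction n with
  | zero =>
    intro k hk
    interval_cases k
    simp [lukF]
  | succ n ih =>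
    intro k hk
    rw [card_lukF_succ]
    push_cast
    rw [Finset.sum_congr rfl (fun j hj => ih j (Finset.mem_Icc.mp hj).2),
      Finset.sum_sub_distrib]
    have hs1 := sum_choose_top (k-1) n (by omega)
    have hs2 := sum_choose_top' (k-1) n (by omega)
    have e1 : (∑ j ∈ Finset.Icc (k-1) n, ((2*n - j).choose n : ℤ)) =
        ((2*n - (k-1) + 1).choose (n+1) : ℤ) := by exact_mod_cast hs1
    have e2 : (∑ j ∈ Finset.Icc (k-1) n, ((2*n - j).choose (n+1) : ℤ)) =
        ((2*n - (k-1) + 1).choose (n+2) : ℤ) := by exact_mod_cast hs2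
    rw [e1, e2]
    rcases Nat.eq_zero_or_pos k with rfl | hkpos
    · -- k = 0 : use symmetry C(2n+1, n) = C(2n+1, n+1)
      have hsym : (2*n+1).choose n = (2*n+1).choose (n+1) := by
        rw [← Nat.choose_symm (by omega : n+1 ≤ 2*n+1)]
        congr 1
        omega
      have h2 : 2*(n+1) - 0 = 2*n + 2 := by omega
      have h3 : 2*n - (0-1) + 1 = 2*n + 1 := by omega
      rw [h2, h3]
      have p1 : (2*n+2).choose (n+1) = (2*n+1).choose n + (2*n+1).choose (n+1) :=
        Nat.choose_succ_succ _ _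
      have p2 : (2*n+2).choose (n+2) = (2*n+1).choose (n+1) + (2*n+1).choose (n+2) :=
        Nat.choose_succ_succ _ _
      push_cast [p1, p2, hsym]
      ring
    · have h3 : 2*n - (k-1) + 1 = 2*(n+1) - k := by omega
      rw [h3]

theorem rlPartialLuk_count (n k : ℕ) (hn : 1 ≤ n) (hk : k ≤ n) :
    (n + 1) * Nat.card {w : List ℤ // IsRLPartialLuk w n k} =
      (k + 1) * Nat.choose (2 * n - k) n := by
  have hcard : Nat.card {w : List ℤ // IsRLPartialLuk w n k} = (lukF n k).card := by
    rw [Nat.card_congr (Equiv.subtypeEquivRight fun w => (mem_lukF n k w).symm)]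
    exact Nat.card_eq_finsetCard _
  rw [hcard]
  have key := card_lukF n k hk
  have h1 := Nat.choose_succ_right_eq (2*n - k) n
  rw [show 2*n - k - n = n - k by omega] at h1
  have h1' : ((2*n - k).choose (n+1) : ℤ) * (n+1) = ((2*n - k).choose n : ℤ) * ((n : ℤ) - k) := by
    rw [show ((n:ℤ) - k) = ((n - k : ℕ) : ℤ) by push_cast [hk]; ring]
    exact_mod_cast h1
  have : ((n : ℤ) + 1) * ((lukF n k).card : ℤ) = ((k : ℤ) + 1) * ((2*n - k).choose n : ℤ) := by
    rw [key]
    linear_combination -h1'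
  exact_mod_cast this
end

section
/- For all n ≥ 1 and 0 ≤ k ≤ n−1, the number H(n,k) of right-to-left partial Łukasiewicz paths of length n ending at height k whose last step is a horizontal step satisfies n · H(n,k) = (k+1) · C(2n−k−2, n−1). -/
/-- The last step of the path is a horizontal step, i.e. `w_n = 0`. -/
def LastStepFlat (w : List ℤ) : Prop := w.getLast? = some 0

/-- Ballot-type numbers defined by recurrence. -/
def Bal : ℕ → ℕ → ℕ
  | 0, 0 => 1
  | 0, _+1 => 0
  | m+1, k => ∑ j ∈ Finset.Icc (k-1) m, Bal m j

lemma take_sum_le {l : List ℤ} (h : ∀ x ∈ l, x ≤ 1) (i : ℕ) :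
    (l.take i).sum ≤ (l.take i).length := by
  have := List.sum_le_card_nsmul (l.take i) 1 (fun x hx => h x (List.mem_of_mem_take hx))
  simpa using this

lemma sum_dropLast_add_getLast {w : List ℤ} (h : w ≠ []) :
    w.dropLast.sum + w.getLast h = w.sum := by
  conv_rhs => rw [← List.dropLast_append_getLast h]
  simp

lemma concat_luk {u : List ℤ} {m j : ℕ} (hu : IsRLPartialLuk u m j) {s : ℤ} (hs : s ≤ 1)
    {k : ℕ} (hk : (k : ℤ) = (j : ℤ) + s) : IsRLPartialLuk (u ++ [s]) (m+1) k := by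
  obtain ⟨hlen, hle, htake, hsum⟩ := hu
  refine ⟨by simp [hlen], ?_, ?_, by simp [hsum, hk.symm]⟩
  · intro x hx
    rcases List.mem_append.1 hx with h1 | h1
    · exact hle x h1
    · simp at h1; omega
  · intro i
    rw [List.take_append, List.sum_append]
    rcases le_or_gt i m with hi | hi
    · have : i - u.length = 0 := by omega
      rw [this]
      simpa using htake i
    · have h1 : u.take i = u := List.take_of_length_le (by omega)
      have h2 : ([s].take (i - u.length)) = [s] := List.take_of_length_le (by simp; omega)
      rw [h1, h2, hsum]
      simp
      omega

lemma dropLast_luk {w : List ℤ} {m k : ℕ} (hw : IsRLPartialLuk w (m+1) k) :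
    IsRLPartialLuk w.dropLast m (w.dropLast.sum.toNat) ∧ 0 ≤ w.dropLast.sum := by
  obtain ⟨hlen, hle, htake, hsum⟩ := hw
  have hd : w.dropLast = w.take m := by rw [List.dropLast_eq_take, hlen]; rfl
  have hpos : 0 ≤ w.dropLast.sum := by rw [hd]; exact htake m
  refine ⟨⟨by simp [hlen], ?_, ?_, by rw [Int.toNat_of_nonneg hpos]⟩, hpos⟩
  · intro x hx
    exact hle x (List.dropLast_sublist w |>.mem hx)
  · intro i
    rw [hd, List.take_take]
    exact htake _

def luk_equiv (m k : ℕ) :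
    {w : List ℤ // IsRLPartialLuk w (m+1) k} ≃
      Σ j : (Finset.Icc (k-1) m : Finset ℕ), {u : List ℤ // IsRLPartialLuk u m j} := by
  have key : ∀ (w : List ℤ), IsRLPartialLuk w (m+1) k →
      (w.dropLast.sum).toNat ∈ Finset.Icc (k-1) m := by
    intro w hw
    obtain ⟨hu, hpos⟩ := dropLast_luk hw
    have hne : w ≠ [] := by
      intro h; rw [h] at hw; exact absurd hw.1 (by simp)
    have hlast : w.dropLast.sum + w.getLast hne = w.sum := sum_dropLast_add_getLast hne
    have hle1 : w.getLast hne ≤ 1 := hw.2.1 _ (List.getLast_mem hne)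
    have hsum : w.sum = (k : ℤ) := hw.2.2.2
    have hlen : w.dropLast.length = m := by simp [hw.1]
    have hsle : w.dropLast.sum ≤ m := by
      have := List.sum_le_card_nsmul w.dropLast 1 (fun x hx => hw.2.1 x ((List.dropLast_sublist w).mem hx))
      rw [hlen] at this; simpa using this
    rw [Finset.mem_Icc]
    omega
  refine
  { toFun := fun w => ⟨⟨(w.1.dropLast.sum).toNat, key w.1 w.2⟩, ⟨w.1.dropLast, (dropLast_luk w.2).1⟩⟩
    invFun := fun p => ⟨p.2.1 ++ [(k : ℤ) - (p.1.1 : ℤ)], ?_⟩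
    left_inv := ?_
    right_inv := ?_ }
  · refine concat_luk p.2.2 ?_ (by ring)
    have := p.1.2
    rw [Finset.mem_Icc] at this
    have : k - 1 ≤ p.1.1 := this.1
    omega
  · rintro ⟨w, hw⟩
    apply Subtype.ext
    have hne : w ≠ [] := by
      intro h; rw [h] at hw; exact absurd hw.1 (by simp)
    have hpos := (dropLast_luk hw).2
    have hlast : w.dropLast.sum + w.getLast hne = w.sum := sum_dropLast_add_getLast hne
    have hsum : w.sum = (k : ℤ) := hw.2.2.2
    show w.dropLast ++ [(k : ℤ) - ((w.dropLast.sum).toNat : ℤ)] = w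
    rw [Int.toNat_of_nonneg hpos]
    have : (k : ℤ) - w.dropLast.sum = w.getLast hne := by omega
    rw [this]
    exact List.dropLast_append_getLast hne
  · rintro ⟨⟨j, hj⟩, ⟨u, hu⟩⟩
    have hd : (u ++ [(k : ℤ) - (j : ℤ)]).dropLast = u := List.dropLast_concat
    have hjj : ((u ++ [(k : ℤ) - (j : ℤ)]).dropLast.sum).toNat = j := by
      rw [hd, hu.2.2.2]; simp
    refine Sigma.ext (Subtype.ext hjj) ?_
    refine (Subtype.heq_iff_coe_eq ?_).2 ?_
    · intro x
      simp only [hjj]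
    · simp only [hd]

lemma luk_fin_card (m : ℕ) : ∀ k,
    Finite {w : List ℤ // IsRLPartialLuk w m k} ∧
      Nat.card {w : List ℤ // IsRLPartialLuk w m k} = Bal m k := by
  induction m with
  | zero =>
    intro k
    match k with
    | 0 =>
      have : ∀ w : List ℤ, IsRLPartialLuk w 0 0 ↔ w = [] := by
        intro w
        constructor
        · intro h; exact List.length_eq_zero_iff.1 h.1
        · rintro rfl; exact ⟨rfl, by simp, by simp, by simp⟩
      haveI : Unique {w : List ℤ // IsRLPartialLuk w 0 0} :=
        { default := ⟨[], (this []).2 rfl⟩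
          uniq := fun w => Subtype.ext ((this w.1).1 w.2) }
      exact ⟨Finite.of_subsingleton, Nat.card_unique⟩
    | k+1 =>
      haveI : IsEmpty {w : List ℤ // IsRLPartialLuk w 0 (k+1)} := by
        constructor
        rintro ⟨w, hw⟩
        have h1 : w = [] := List.length_eq_zero_iff.1 hw.1
        have := hw.2.2.2
        rw [h1] at this
        simp at this
        omega
      exact ⟨Finite.of_subsingleton, by simp [Bal, Nat.card_of_isEmpty]⟩
  | succ m ih =>
    intro k
    haveI : ∀ j : (Finset.Icc (k-1) m : Finset ℕ), Finite {u : List ℤ // IsRLPartialLuk u m j} :=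
      fun j => (ih j).1
    have e := luk_equiv m k
    haveI : Finite {w : List ℤ // IsRLPartialLuk w (m+1) k} := Finite.of_equiv _ e.symm
    refine ⟨inferInstance, ?_⟩
    rw [Nat.card_congr e]
    letI : ∀ j : (Finset.Icc (k-1) m : Finset ℕ), Fintype {u : List ℤ // IsRLPartialLuk u m j} :=
      fun j => Fintype.ofFinite _
    rw [Nat.card_eq_fintype_card, Fintype.card_sigma]
    show _ = Bal (m+1) k
    rw [show Bal (m+1) k = ∑ j ∈ Finset.Icc (k-1) m, Bal m j from rfl]
    rw [← Finset.sum_coe_sort (Finset.Icc (k-1) m) (fun j => Bal m j)]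
    congr 1
    funext j
    rw [← Nat.card_eq_fintype_card, (ih j).2]

lemma bal_helper (m : ℕ) (hBal : ∀ k ≤ m, Bal m k + Nat.choose (2*m-k) (m+1) = Nat.choose (2*m-k) m) :
    ∀ d ≤ m, (∑ j ∈ Finset.Icc (m-d) m, Bal m j) + Nat.choose (m+d+1) (m+2) = Nat.choose (m+d+1) (m+1) := by
  intro d
  induction d with
  | zero =>
    intro _
    have h1 := hBal m le_rfl
    have h2 : 2*m - m = m := by omega
    rw [h2] at h1
    have h3 : Nat.choose m (m+1) = 0 := Nat.choose_eq_zero_of_lt (by omega)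
    have h4 : Nat.choose m m = 1 := Nat.choose_self m
    have h5 : Nat.choose (m+1) (m+2) = 0 := Nat.choose_eq_zero_of_lt (by omega)
    have h6 : Nat.choose (m+1) (m+1) = 1 := Nat.choose_self _
    simp only [Nat.sub_zero, Nat.add_zero, Finset.Icc_self, Finset.sum_singleton]
    omega
  | succ d ihd =>
    intro hdm
    have ih := ihd (by omega)
    have hsplit : Finset.Icc (m-(d+1)) m = Finset.cons (m-(d+1)) (Finset.Ioc (m-(d+1)) m) (by simp) :=
      Finset.Icc_eq_cons_Ioc (by omega)
    have hioc : Finset.Ioc (m-(d+1)) m = Finset.Icc (m-d) m := by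
      rw [← Finset.Icc_add_one_left_eq_Ioc]
      congr 1
      omega
    rw [hsplit, Finset.sum_cons, hioc]
    have hB := hBal (m-(d+1)) (by omega)
    have harg : 2*m - (m-(d+1)) = m+d+1 := by omega
    rw [harg] at hB
    have hp1 : Nat.choose (m+d+2) (m+2) = Nat.choose (m+d+1) (m+1) + Nat.choose (m+d+1) (m+2) :=
      Nat.choose_succ_succ (m+d+1) (m+1)
    have hp2 : Nat.choose (m+d+2) (m+1) = Nat.choose (m+d+1) m + Nat.choose (m+d+1) (m+1) :=
      Nat.choose_succ_succ (m+d+1) m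
    have goal_eq : m + (d+1) + 1 = m + d + 2 := by omega
    rw [goal_eq, hp1, hp2]
    omega

lemma bal_val : ∀ m, ∀ k ≤ m, Bal m k + Nat.choose (2*m-k) (m+1) = Nat.choose (2*m-k) m := by
  intro m
  induction m with
  | zero =>
    intro k hk
    interval_cases k
    simp [Bal]
  | succ m ih =>
    intro k hk
    have hB : Bal (m+1) k = ∑ j ∈ Finset.Icc (k-1) m, Bal m j := rfl
    rcases Nat.eq_zero_or_pos k with rfl | hkpos
    · have h := bal_helper m ih m le_rfl
      rw [Nat.sub_self, show m+m+1 = 2*m+1 by ring] at h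
      have hp1 : Nat.choose (2*m+2) (m+2) = Nat.choose (2*m+1) (m+1) + Nat.choose (2*m+1) (m+2) :=
        Nat.choose_succ_succ (2*m+1) (m+1)
      have hp2 : Nat.choose (2*m+2) (m+1) = Nat.choose (2*m+1) m + Nat.choose (2*m+1) (m+1) :=
        Nat.choose_succ_succ (2*m+1) m
      have hsym : Nat.choose (2*m+1) m = Nat.choose (2*m+1) (m+1) := by
        have h' := Nat.choose_symm (n := 2*m+1) (k := m+1) (by omega)
        rw [show 2*m+1 - (m+1) = m by omega] at h'
        exact h'
      rw [hB, show (0:ℕ)-1 = 0 from rfl, show 2*(m+1)-0 = 2*m+2 by omega,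
        show m+1+1 = m+2 from rfl, hp1, hp2]
      omega
    · have hd := bal_helper m ih (m - (k-1)) (by omega)
      have h1 : m - (m - (k-1)) = k - 1 := by omega
      have h2 : m + (m - (k-1)) + 1 = 2*(m+1) - k := by omega
      rw [h1, h2] at hd
      rw [hB]
      have hgoal : m + 1 + 1 = m + 2 := rfl
      rw [hgoal]
      exact hd

def flat_equiv (m k : ℕ) :
    {w : List ℤ // IsRLPartialLuk w (m+1) k ∧ LastStepFlat w} ≃
      {u : List ℤ // IsRLPartialLuk u m k} := by
  refine
  { toFun := fun w => ⟨w.1.dropLast, ?_⟩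
    invFun := fun u => ⟨u.1 ++ [(0 : ℤ)], concat_luk u.2 (by norm_num) (by simp),
      by simp [LastStepFlat, List.getLast?_concat]⟩
    left_inv := ?_
    right_inv := ?_ }
  · obtain ⟨hw, hflat⟩ := w.2
    have hne : w.1 ≠ [] := by
      intro h; rw [h] at hw; exact absurd hw.1 (by simp)
    have hlast : w.1.getLast hne = 0 := by
      have := List.getLast?_eq_getLast hne
      rw [LastStepFlat, this] at hflat
      exact Option.some.inj hflat
    obtain ⟨hu, hpos⟩ := dropLast_luk hw
    have hsum : w.1.dropLast.sum + w.1.getLast hne = w.1.sum := sum_dropLast_add_getLast hne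
    have hsum2 : w.1.dropLast.sum = (k : ℤ) := by
      rw [hlast] at hsum
      rw [← hw.2.2.2]
      omega
    have : (w.1.dropLast.sum).toNat = k := by rw [hsum2]; simp
    rwa [this] at hu
  · rintro ⟨w, hw, hflat⟩
    apply Subtype.ext
    have hne : w ≠ [] := by
      intro h; rw [h] at hw; exact absurd hw.1 (by simp)
    have hlast : w.getLast hne = 0 := by
      have := List.getLast?_eq_getLast hne
      rw [LastStepFlat, this] at hflat
      exact Option.some.inj hflat
    show w.dropLast ++ [(0:ℤ)] = w
    rw [← hlast]
    exact List.dropLast_append_getLast hne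
  · rintro ⟨u, hu⟩
    apply Subtype.ext
    exact List.dropLast_concat

theorem rlPartialLuk_lastFlat_count (n k : ℕ) (hn : 1 ≤ n) (hk : k ≤ n - 1) :
    n * Nat.card {w : List ℤ // IsRLPartialLuk w n k ∧ LastStepFlat w} =
      (k + 1) * Nat.choose (2 * n - k - 2) (n - 1) := by
  obtain ⟨m, rfl⟩ : ∃ m, n = m + 1 := ⟨n - 1, by omega⟩
  have hkm : k ≤ m := by omega
  have hcard : Nat.card {w : List ℤ // IsRLPartialLuk w (m+1) k ∧ LastStepFlat w} = Bal m k := by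
    rw [Nat.card_congr (flat_equiv m k)]
    exact (luk_fin_card m k).2
  rw [hcard]
  have harg : 2 * (m+1) - k - 2 = 2*m - k := by omega
  have hm1 : m + 1 - 1 = m := by omega
  rw [harg, hm1]
  set a := Nat.choose (2*m-k) m with ha
  set b := Nat.choose (2*m-k) (m+1) with hb
  have h1 : Bal m k + b = a := bal_val m k hkm
  have h2 : b * (m+1) = a * (m - k) := by
    rw [ha, hb]
    have := Nat.choose_succ_right_eq (2*m-k) m
    rw [show 2*m-k-m = m-k by omega] at this
    exact this
  -- (m+1) * Bal m k = (k+1) * a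
  have h3 : (m+1) * Bal m k + a * (m-k) = (m+1) * a := by
    have : (m+1) * (Bal m k + b) = (m+1) * a := by rw [h1]
    rw [Nat.mul_add] at this
    have h4 : (m+1) * b = a * (m-k) := by rw [← h2]; ring
    omega
  have h5 : (m+1) * a = (k+1) * a + a * (m-k) := by
    have : (m+1) = (k+1) + (m-k) := by omega
    rw [this, Nat.add_mul]
    ring
  omega
end

section
/- For all 0 ≤ k ≤ n, the number of right-to-left partial Łukasiewicz paths of length n ending at height k equals the number of (k+1)-tuples (L_1, …, L_{k+1}) of Łukasiewicz paths whose lengths sum to n−k (this is the coefficient identity [u^k]Total(z,u) = z^k·L(z)^{k+1}, where L(z) is the Catalan generating function). -/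
namespace RLLukAux

/-- Closed/partial path predicate: steps `≤ 1` and all prefix sums `≥ 0`. -/
def Pre (w : List ℤ) : Prop := (∀ x ∈ w, x ≤ 1) ∧ ∀ i, 0 ≤ (w.take i).sum

/-- Reverse and negate. -/
def revneg (l : List ℤ) : List ℤ := (l.map (fun x => -x)).reverse

lemma revneg_length (l : List ℤ) : (revneg l).length = l.length := by simp [revneg]

lemma revneg_revneg (l : List ℤ) : revneg (revneg l) = l := by
  simp [revneg]

lemma sum_map_neg (l : List ℤ) : (l.map (fun x => -x)).sum = -l.sum := by
  induction l with
  | nil => simp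
  | cons a t ih => simp [ih]; ring

lemma revneg_sum (l : List ℤ) : (revneg l).sum = -l.sum := by
  simp [revneg, List.sum_reverse, sum_map_neg]

lemma sum_drop (l : List ℤ) (i : ℕ) : (l.drop i).sum = l.sum - (l.take i).sum := by
  have h : (l.take i).sum + (l.drop i).sum = l.sum := by
    rw [← List.sum_append, List.take_append_drop]
  omega

lemma revneg_take_sum (l : List ℤ) (i : ℕ) :
    ((revneg l).take i).sum = (l.take (l.length - i)).sum - l.sum := by
  have h1 : ((revneg l).take i) =
      ((l.map (fun x => -x)).drop ((l.map (fun x => -x)).length - i)).reverse := by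
    simp [revneg, List.take_reverse]
  rw [h1, List.sum_reverse]
  have h2 : ((l.map (fun x => -x)).drop (l.length - i)) =
      (l.drop (l.length - i)).map (fun x => -x) := by
    simp [List.map_drop]
  simp only [List.length_map]
  rw [h2, sum_map_neg, sum_drop]
  ring

lemma isLuk_revneg_of_closed {w : List ℤ} (hw : Pre w) (h0 : w.sum = 0) : IsLuk (revneg w) := by
  refine ⟨?_, ?_, ?_⟩
  · intro x hx
    simp only [revneg, List.mem_reverse, List.mem_map] at hx
    obtain ⟨a, ha, rfl⟩ := hx
    have := hw.1 a ha
    omega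
  · intro i
    rw [revneg_take_sum, h0]
    have := hw.2 (w.length - i)
    omega
  · rw [revneg_sum, h0]; ring

lemma closed_revneg_of_isLuk {l : List ℤ} (hl : IsLuk l) : Pre (revneg l) ∧ (revneg l).sum = 0 := by
  refine ⟨⟨?_, ?_⟩, ?_⟩
  · intro x hx
    simp only [revneg, List.mem_reverse, List.mem_map] at hx
    obtain ⟨a, ha, rfl⟩ := hx
    have := hl.1 a ha
    omega
  · intro i
    rw [revneg_take_sum, hl.2.2]
    have := hl.2.1 (l.length - i)
    omega
  · rw [revneg_sum, hl.2.2]; ring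

lemma sum_take_append (P Q : List ℤ) (j : ℕ) :
    ((P ++ Q).take (P.length + j)).sum = P.sum + (Q.take j).sum := by
  rw [List.take_append, List.sum_append, List.take_of_length_le (by omega), Nat.add_sub_cancel_left]

lemma sum_take_drop (w : List ℤ) (m j : ℕ) :
    ((w.drop m).take j).sum = (w.take (m + j)).sum - (w.take m).sum := by
  rw [List.take_drop, sum_drop, List.take_take]
  have h : m ⊓ (m + j) = m := inf_eq_left.mpr (Nat.le_add_right m j)
  rw [h]

lemma pre_append_cons_one {P Q : List ℤ} (hP : Pre P) (hP0 : P.sum = 0) (hQ : Pre Q) :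
    Pre (P ++ 1 :: Q) := by
  constructor
  · intro x hx
    rcases List.mem_append.1 hx with h | h
    · exact hP.1 x h
    · rcases List.mem_cons.1 h with rfl | h
      · exact le_refl 1
      · exact hQ.1 x h
  · intro i
    rcases le_or_gt i P.length with h | h
    · rw [List.take_append_of_le_length h]
      exact hP.2 i
    · obtain ⟨j, hj⟩ : ∃ j, i = P.length + (j + 1) := ⟨i - P.length - 1, by omega⟩
      rw [hj, sum_take_append, hP0, List.take_succ_cons, List.sum_cons]
      have := hQ.2 j
      omega

lemma split_exists {w : List ℤ} (hw : Pre w) {s : ℤ} (hsum : w.sum = s) (hs : 1 ≤ s) :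
    ∃ P Q, w = P ++ 1 :: Q ∧ Pre P ∧ P.sum = 0 ∧ Pre Q ∧ Q.sum = s - 1 := by
  classical
  set t := Nat.findGreatest (fun i => (w.take i).sum = 0) w.length with ht
  have htP : (w.take t).sum = 0 :=
    Nat.findGreatest_spec (P := fun i => (w.take i).sum = 0) (Nat.zero_le _) (by simp)
  have htle : t ≤ w.length := Nat.findGreatest_le _
  have hkey : ∀ i, t < i → 1 ≤ (w.take i).sum := by
    intro i hi
    rcases le_or_gt i w.length with h | h
    · have hne : ¬ ((w.take i).sum = 0) := Nat.findGreatest_is_greatest hi h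
      have := hw.2 i
      omega
    · rw [List.take_of_length_le (le_of_lt h)]
      omega
  have htlt : t < w.length := by
    rcases lt_or_eq_of_le htle with h | h
    · exact h
    · exfalso
      rw [h, List.take_length] at htP
      omega
  have hget : w[t] = 1 := by
    have h1 := List.sum_take_succ w t htlt
    have h2 := hkey (t + 1) (Nat.lt_succ_self t)
    have h3 := hw.1 _ (List.getElem_mem htlt)
    omega
  have htake1 : (w.take (t + 1)).sum = 1 := by
    have h1 := List.sum_take_succ w t htlt
    omega
  refine ⟨w.take t, w.drop (t + 1), ?_, ⟨?_, ?_⟩, htP, ⟨?_, ?_⟩, ?_⟩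
  · conv_lhs => rw [← List.take_append_drop t w]
    rw [List.drop_eq_getElem_cons htlt, hget]
  · intro x hx; exact hw.1 x (List.mem_of_mem_take hx)
  · intro i
    rw [List.take_take]
    exact hw.2 _
  · intro x hx; exact hw.1 x (List.mem_of_mem_drop hx)
  · intro j
    rw [sum_take_drop, htake1]
    have := hkey (t + 1 + j) (by omega)
    omega
  · rw [sum_drop, htake1, hsum]

lemma split_len_not_lt {P Q P' Q' : List ℤ} (hP0 : P.sum = 0) (hP0' : P'.sum = 0)
    (hQ : ∀ i, 0 ≤ (Q.take i).sum)
    (h : P.length < P'.length) (heq : P ++ 1 :: Q = P' ++ 1 :: Q') : False := by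
  have hs : ((P ++ 1 :: Q).take P'.length).sum = ((P' ++ 1 :: Q').take P'.length).sum := by
    rw [heq]
  rw [List.take_left] at hs
  obtain ⟨j, hj⟩ : ∃ j, P'.length = P.length + (j + 1) := ⟨P'.length - P.length - 1, by omega⟩
  rw [hj, sum_take_append, List.take_succ_cons, List.sum_cons, hP0] at hs
  have := hQ j
  omega

lemma split_unique {P Q P' Q' : List ℤ} (hP0 : P.sum = 0) (hQ : ∀ i, 0 ≤ (Q.take i).sum)
    (hP0' : P'.sum = 0) (hQ' : ∀ i, 0 ≤ (Q'.take i).sum)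
    (heq : P ++ 1 :: Q = P' ++ 1 :: Q') : P = P' ∧ Q = Q' := by
  have hlen : P.length = P'.length := by
    rcases Nat.lt_trichotomy P.length P'.length with h | h | h
    · exact absurd (split_len_not_lt hP0 hP0' hQ h heq) (fun x => x)
    · exact h
    · exact absurd (split_len_not_lt hP0' hP0 hQ' h heq.symm) (fun x => x)
  obtain ⟨h1, h2⟩ := List.append_inj heq hlen
  exact ⟨h1, by injection h2⟩

lemma master (k : ℕ) : ∃ e : {L : Fin (k + 1) → List ℤ // ∀ i, IsLuk (L i)} ≃
      {w : List ℤ // Pre w ∧ w.sum = (k : ℤ)},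
    ∀ L : {L : Fin (k + 1) → List ℤ // ∀ i, IsLuk (L i)},
      (∑ i, (L.1 i).length) + k = (e L).1.length := by
  induction k with
  | zero =>
    refine ⟨Equiv.ofBijective
      (fun L => ⟨revneg (L.1 0),
        (closed_revneg_of_isLuk (L.2 0)).1, by
          rw [(closed_revneg_of_isLuk (L.2 0)).2]; norm_num⟩) ⟨?_, ?_⟩, ?_⟩
    · intro L L' h
      have hv : revneg (L.1 0) = revneg (L'.1 0) := congrArg Subtype.val h
      have h0 : L.1 0 = L'.1 0 := by
        have := congrArg revneg hv
        rwa [revneg_revneg, revneg_revneg] at this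
      apply Subtype.ext
      funext i
      refine Fin.cases ?_ (fun j => j.elim0) i
      exact h0
    · intro w
      have hsum0 : w.1.sum = 0 := by have := w.2.2; omega
      refine ⟨⟨fun _ => revneg w.1, fun _ => isLuk_revneg_of_closed w.2.1 hsum0⟩, ?_⟩
      apply Subtype.ext
      show revneg (revneg w.1) = w.1
      exact revneg_revneg w.1
    · intro L
      show (∑ i, (L.1 i).length) + 0 = (revneg (L.1 0)).length
      rw [revneg_length]
      simp [Fin.sum_univ_succ]
  | succ k ih =>
    obtain ⟨e, he⟩ := ih
    set G : {L : Fin (k + 2) → List ℤ // ∀ i, IsLuk (L i)} →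
        {w : List ℤ // Pre w ∧ w.sum = ((k + 1 : ℕ) : ℤ)} := fun L =>
      ⟨revneg (L.1 0) ++ 1 ::
        (e ⟨fun i : Fin (k + 1) => L.1 i.succ, fun i => L.2 i.succ⟩).1,
        by
          have h0 := closed_revneg_of_isLuk (L.2 0)
          have h1 := (e ⟨fun i : Fin (k + 1) => L.1 i.succ, fun i => L.2 i.succ⟩).2
          exact pre_append_cons_one h0.1 h0.2 h1.1,
        by
          have h0 := closed_revneg_of_isLuk (L.2 0)
          have h1 := (e ⟨fun i : Fin (k + 1) => L.1 i.succ, fun i => L.2 i.succ⟩).2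
          rw [List.sum_append, List.sum_cons, h0.2, h1.2]
          push_cast
          ring⟩ with hG
    have hGval : ∀ L : {L : Fin (k + 2) → List ℤ // ∀ i, IsLuk (L i)},
        (G L).1 = revneg (L.1 0) ++ 1 ::
          (e ⟨fun i : Fin (k + 1) => L.1 i.succ, fun i => L.2 i.succ⟩).1 := by
      intro L
      simp only [hG]
    have hGbij : Function.Bijective G := by
      constructor
      · intro L L' h
        have hv : (G L).1 = (G L').1 := congrArg Subtype.val h
        rw [hGval, hGval] at hv
        have hc0 := closed_revneg_of_isLuk (L.2 0)
        have hc0' := closed_revneg_of_isLuk (L'.2 0)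
        have he1 := (e ⟨fun i : Fin (k + 1) => L.1 i.succ, fun i => L.2 i.succ⟩).2
        have he1' := (e ⟨fun i : Fin (k + 1) => L'.1 i.succ, fun i => L'.2 i.succ⟩).2
        obtain ⟨h1, h2⟩ := split_unique hc0.2 he1.1.2 hc0'.2 he1'.1.2 hv
        have h0 : L.1 0 = L'.1 0 := by
          have := congrArg revneg h1
          rwa [revneg_revneg, revneg_revneg] at this
        have htail := e.injective (Subtype.ext h2)
        have htail' : (fun i : Fin (k + 1) => L.1 i.succ) =
            (fun i : Fin (k + 1) => L'.1 i.succ) := congrArg Subtype.val htail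
        apply Subtype.ext
        funext i
        refine Fin.cases ?_ ?_ i
        · exact h0
        · intro j
          exact congrFun htail' j
      · intro w
        have hs1 : (1 : ℤ) ≤ ((k + 1 : ℕ) : ℤ) := by push_cast; omega
        obtain ⟨P, Q, hw, hPpre, hP0, hQpre, hQsum⟩ := split_exists w.2.1 w.2.2 hs1
        have hQsum' : Q.sum = (k : ℤ) := by push_cast at hQsum ⊢; omega
        set T := e.symm ⟨Q, hQpre, hQsum'⟩ with hT
        obtain ⟨M, hM⟩ : ∃ M : Fin (k + 2) → List ℤ, M = Fin.cons (revneg P) T.1 := ⟨_, rfl⟩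
        have hLuk : ∀ i, IsLuk (M i) := by
          intro i
          rw [hM]
          refine Fin.cases ?_ ?_ i
          · rw [Fin.cons_zero]
            exact isLuk_revneg_of_closed hPpre hP0
          · intro j
            rw [Fin.cons_succ]
            exact T.2 j
        refine ⟨⟨M, hLuk⟩, ?_⟩
        apply Subtype.ext
        rw [hGval]
        have hc : (⟨fun i : Fin (k + 1) => M i.succ,
            fun i => hLuk i.succ⟩ : {L : Fin (k + 1) → List ℤ // ∀ i, IsLuk (L i)}) = T := by
          apply Subtype.ext
          funext i
          show M i.succ = T.1 i
          rw [hM]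
          exact Fin.cons_succ _ _ i
        have hM0 : M 0 = revneg P := by rw [hM]; exact Fin.cons_zero _ _
        show revneg (M 0) ++ 1 ::
          (e ⟨fun i : Fin (k + 1) => M i.succ, fun i => hLuk i.succ⟩).1 = w.1
        rw [hc, hT, Equiv.apply_symm_apply, hM0, revneg_revneg]
        exact hw.symm
    refine ⟨Equiv.ofBijective G hGbij, ?_⟩
    intro L
    show (∑ i, (L.1 i).length) + (k + 1) = (G L).1.length
    have hsum : (∑ i : Fin (k + 1), (L.1 i.succ).length) + k =
        (e ⟨fun i : Fin (k + 1) => L.1 i.succ, fun i => L.2 i.succ⟩).1.length :=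
      he ⟨fun i : Fin (k + 1) => L.1 i.succ, fun i => L.2 i.succ⟩
    have hlen : (G L).1.length = (L.1 0).length + 1 +
        (e ⟨fun i : Fin (k + 1) => L.1 i.succ, fun i => L.2 i.succ⟩).1.length := by
      rw [hGval]
      simp [revneg_length]
      omega
    rw [Fin.sum_univ_succ]
    omega

end RLLukAux

open RLLukAux in
theorem rlPartialLuk_count_eq_tuples (n k : ℕ) (hk : k ≤ n) :
    Nat.card {w : List ℤ // IsRLPartialLuk w n k} =
      Nat.card {L : Fin (k + 1) → List ℤ //
        (∀ i, IsLuk (L i)) ∧ (∑ i, (L i).length) = n - k} := by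
  obtain ⟨e, he⟩ := master k
  have hle : ∀ w : {w : List ℤ // Pre w ∧ w.sum = (k : ℤ)}, k ≤ w.1.length := by
    intro w
    have h1 : w.1.sum ≤ w.1.length • (1 : ℤ) :=
      List.sum_le_card_nsmul _ _ w.2.1.1
    have h2 := w.2.2
    simp at h1
    omega
  have hiff : ∀ L : {L : Fin (k + 1) → List ℤ // ∀ i, IsLuk (L i)},
      (∑ i, (L.1 i).length = n - k) ↔ ((e L).1.length = n) := by
    intro L
    have h1 := he L
    have h2 := hle (e L)
    constructor
    · intro h; omega
    · intro h; omega
  have eL : {w : List ℤ // IsRLPartialLuk w n k} ≃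
      {x : {w : List ℤ // Pre w ∧ w.sum = (k : ℤ)} // x.1.length = n} :=
    { toFun := fun w => ⟨⟨w.1, ⟨w.2.2.1, w.2.2.2.1⟩, w.2.2.2.2⟩, w.2.1⟩
      invFun := fun x => ⟨x.1.1, x.2, x.1.2.1.1, x.1.2.1.2, x.1.2.2⟩
      left_inv := fun _ => rfl
      right_inv := fun _ => rfl }
  have eR : {L : Fin (k + 1) → List ℤ // (∀ i, IsLuk (L i)) ∧ (∑ i, (L i).length) = n - k} ≃
      {x : {L : Fin (k + 1) → List ℤ // ∀ i, IsLuk (L i)} //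
        ∑ i, (x.1 i).length = n - k} :=
    { toFun := fun L => ⟨⟨L.1, L.2.1⟩, L.2.2⟩
      invFun := fun x => ⟨x.1.1, x.1.2, x.2⟩
      left_inv := fun _ => rfl
      right_inv := fun _ => rfl }
  exact Nat.card_congr (eL.trans (((Equiv.subtypeEquiv e hiff).symm).trans eR.symm))
end

section
/- For every natural number n, the total number of right-to-left partial Łukasiewicz paths of length n (ending at any height k ≥ 0) equals the (n+1)-st Catalan number catalan (n+1). -/
/-- A right-to-left partial Łukasiewicz path of length `n` (ending at any
height `k ≥ 0`): a list of `n` integer steps, each `≤ 1`, with all partial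
sums `≥ 0`. -/
def IsRLPartial (w : List ℤ) (n : ℕ) : Prop :=
  w.length = n ∧ (∀ x ∈ w, x ≤ 1) ∧ (∀ i, 0 ≤ (w.take i).sum)

namespace RLPartialAux

/-- Paths of length `n` ending at height `k`. -/
def pathsF : ℕ → ℕ → Finset (List ℤ)
  | 0, 0 => {([] : List ℤ)}
  | 0, _+1 => (∅ : Finset (List ℤ))
  | n+1, k =>
      ((Finset.range (n+1)).filter (fun j => k ≤ j + 1)).biUnion
        (fun j => (pathsF n j).image (fun w => w ++ [(k : ℤ) - (j : ℤ)]))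

lemma sum_bounds {v : List ℤ} {n : ℕ} (h : IsRLPartial v n) :
    0 ≤ v.sum ∧ v.sum ≤ (n : ℤ) := by
  obtain ⟨hlen, hle, hpre⟩ := h
  constructor
  · have := hpre v.length
    simpa using this
  · have := List.sum_le_card_nsmul v 1 hle
    simp only [nsmul_eq_mul, mul_one, hlen] at this
    exact this

lemma isRL_concat {v : List ℤ} {x : ℤ} {n : ℕ} :
    IsRLPartial (v ++ [x]) (n+1) ↔ IsRLPartial v n ∧ x ≤ 1 ∧ 0 ≤ v.sum + x := by
  constructor
  · rintro ⟨hlen, hle, hpre⟩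
    have hvlen : v.length = n := by simpa using hlen
    have hx : x ≤ 1 := hle x (by simp)
    have hsum : 0 ≤ v.sum + x := by
      have := hpre (n+1)
      rw [List.take_of_length_le (le_of_eq hlen)] at this
      simpa using this
    refine ⟨⟨hvlen, fun y hy => hle y (by simp [hy]), fun i => ?_⟩, hx, hsum⟩
    rcases le_or_gt i n with h | h
    · have := hpre i
      rwa [List.take_append_of_le_length (by omega)] at this
    · rw [List.take_of_length_le (by omega)]
      have := hpre n
      rw [List.take_append_of_le_length (by omega),
        List.take_of_length_le (le_of_eq hvlen)] at this
      exact this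
  · rintro ⟨⟨hvlen, hle, hpre⟩, hx, hs⟩
    refine ⟨by simp [hvlen], ?_, ?_⟩
    · intro y hy
      rw [List.mem_append] at hy
      rcases hy with h | h
      · exact hle y h
      · simp only [List.mem_singleton] at h
        omega
    · intro i
      rcases le_or_gt i v.length with h | h
      · rw [List.take_append_of_le_length h]
        exact hpre i
      · rw [List.take_of_length_le (by simp; omega)]
        simpa using hs

lemma mem_pathsF : ∀ (n k : ℕ) (w : List ℤ),
    w ∈ pathsF n k ↔ (IsRLPartial w n ∧ w.sum = (k : ℤ)) := by
  intro n
  induction n with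
  | zero =>
    intro k w
    match k with
    | 0 =>
      simp only [pathsF, Finset.mem_singleton]
      constructor
      · rintro rfl
        exact ⟨⟨rfl, by simp, by simp⟩, by simp⟩
      · rintro ⟨⟨hlen, -, -⟩, -⟩
        exact List.length_eq_zero_iff.mp hlen
    | k+1 =>
      simp only [pathsF, Finset.notMem_empty, false_iff, not_and]
      rintro ⟨hlen, -, -⟩
      rw [List.length_eq_zero_iff.mp hlen]
      intro h
      simp only [List.sum_nil] at h
      omega
  | succ n ih =>
    intro k w
    constructor
    · intro hw
      simp only [pathsF, Finset.mem_biUnion, Finset.mem_filter, Finset.mem_range,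
        Finset.mem_image] at hw
      obtain ⟨j, ⟨hjn, hkj⟩, v, hv, rfl⟩ := hw
      obtain ⟨hvP, hvs⟩ := (ih j v).mp hv
      have hsum : (v ++ [(k:ℤ) - (j:ℤ)]).sum = (k:ℤ) := by
        simp [hvs]
      refine ⟨isRL_concat.mpr ⟨hvP, ?_, ?_⟩, hsum⟩
      · omega
      · rw [hvs]; omega
    · rintro ⟨hP, hsum⟩
      rcases w.eq_nil_or_concat' with rfl | ⟨v, x, rfl⟩
      · simpa using hP.1
      obtain ⟨hvP, hx, hxs⟩ := isRL_concat.mp hP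
      obtain ⟨hv0, hvn⟩ := sum_bounds hvP
      have hjv : ((v.sum.toNat : ℕ) : ℤ) = v.sum := Int.toNat_of_nonneg hv0
      have hsum' : v.sum + x = (k:ℤ) := by simpa using hsum
      simp only [pathsF, Finset.mem_biUnion, Finset.mem_filter, Finset.mem_range,
        Finset.mem_image]
      refine ⟨v.sum.toNat, ⟨by omega, by omega⟩, v, (ih _ v).mpr ⟨hvP, hjv.symm⟩, ?_⟩
      have : (k:ℤ) - (v.sum.toNat : ℤ) = x := by omega
      rw [this]

lemma card_pathsF_succ (n k : ℕ) :
    (pathsF (n+1) k).card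
      = ∑ j ∈ (Finset.range (n+1)).filter (fun j => k ≤ j + 1), (pathsF n j).card := by
  show (Finset.biUnion _ _).card = _
  rw [Finset.card_biUnion]
  · exact Finset.sum_congr rfl fun j _ =>
      Finset.card_image_of_injective _ (fun a b h => by simpa using h)
  · intro j1 h1 j2 h2 hne
    rw [Function.onFun, Finset.disjoint_left]
    rintro w hw1 hw2
    simp only [Finset.mem_image] at hw1 hw2
    obtain ⟨v1, hv1, rfl⟩ := hw1
    obtain ⟨v2, hv2, he⟩ := hw2
    have hv1s := ((mem_pathsF n j1 v1).mp hv1).2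
    have hv2s := ((mem_pathsF n j2 v2).mp hv2).2
    have hvv : v2 = v1 := by
      have := congrArg List.dropLast he
      simpa using this
    apply hne
    have : (j2:ℤ) = (j1:ℤ) := by rw [← hv1s, ← hvv, hv2s]
    omega

lemma filter_eq_Icc (n k : ℕ) :
    (Finset.range (n+1)).filter (fun j => k ≤ j + 1) = Finset.Icc (k-1) n := by
  ext j
  simp only [Finset.mem_filter, Finset.mem_range, Finset.mem_Icc]
  omega

lemma sum_choose_shift (n m r : ℕ) (hm : m ≤ n) :
    ∑ j ∈ Finset.Icc m n, (2*n - j).choose r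
      = ∑ i ∈ Finset.Icc n (2*n - m), i.choose r := by
  refine Finset.sum_nbij' (fun j => 2*n - j) (fun i => 2*n - i) ?_ ?_ ?_ ?_ ?_
  · intro a ha; simp only [Finset.mem_Icc] at *; omega
  · intro a ha; simp only [Finset.mem_Icc] at *; omega
  · intro a ha; simp only [Finset.mem_Icc] at ha; show 2*n - (2*n - a) = a; omega
  · intro a ha; simp only [Finset.mem_Icc] at ha; show 2*n - (2*n - a) = a; omega
  · intro a ha; rfl

lemma sum_choose_succ (n M : ℕ) :
    ∑ i ∈ Finset.Icc n M, i.choose (n+1) = (M+1).choose (n+2) := by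
  rw [← Nat.sum_Icc_choose M (n+1)]
  refine (Finset.sum_subset (fun i hi => ?_) (fun i hi hni => ?_)).symm
  · simp only [Finset.mem_Icc] at *; omega
  · simp only [Finset.mem_Icc] at hi hni
    have : i = n := by omega
    rw [this]
    exact Nat.choose_succ_self n

lemma card_pathsF (n : ℕ) : ∀ k, k ≤ n →
    (pathsF n k).card + (2*n - k).choose (n+1) = (2*n - k).choose n := by
  induction n with
  | zero =>
    intro k hk
    interval_cases k
    simp [pathsF]
  | succ n ih =>
    intro k hk
    have key : (pathsF (n+1) k).card + (2*n - (k-1) + 1).choose (n+2)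
        = (2*n - (k-1) + 1).choose (n+1) := by
      rw [card_pathsF_succ, filter_eq_Icc]
      have hm : k - 1 ≤ n := by omega
      have hsum : ∑ j ∈ Finset.Icc (k-1) n, ((pathsF n j).card + (2*n - j).choose (n+1))
          = ∑ j ∈ Finset.Icc (k-1) n, (2*n - j).choose n :=
        Finset.sum_congr rfl (fun j hj => ih j (Finset.mem_Icc.mp hj).2)
      rw [Finset.sum_add_distrib, sum_choose_shift n (k-1) (n+1) hm,
        sum_choose_shift n (k-1) n hm, sum_choose_succ, Nat.sum_Icc_choose] at hsum
      exact hsum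
    rcases Nat.eq_zero_or_pos k with rfl | hk0
    · have e : 2*n - (0-1) + 1 = 2*n+1 := by omega
      rw [e] at key
      have p1 : (2*n+1+1).choose (n+1) = (2*n+1).choose n + (2*n+1).choose (n+1) :=
        Nat.choose_succ_succ _ _
      have p2 : (2*n+1+1).choose (n+1+1) = (2*n+1).choose (n+1) + (2*n+1).choose (n+2) :=
        Nat.choose_succ_succ _ _
      have p3 : (2*n+1).choose n = (2*n+1).choose (n+1) := by
        have := Nat.choose_symm (show n+1 ≤ 2*n+1 by omega)
        rwa [show 2*n+1-(n+1) = n by omega] at this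
      rw [show 2*(n+1) - 0 = 2*n+1+1 by omega]
      rw [show n+1+1 = n+2 by rfl] at p2 ⊢
      linarith [key, p1, p2, p3]
    · have e : 2*n - (k-1) + 1 = 2*(n+1) - k := by omega
      rwa [e] at key

lemma total_catalan (n : ℕ) :
    ∑ k ∈ Finset.range (n+1), (pathsF n k).card = catalan (n+1) := by
  have h1 : ∑ k ∈ Finset.range (n+1), (pathsF n k).card + (2*n+1).choose (n+2)
      = (2*n+1).choose (n+1) := by
    have hsum : ∑ k ∈ Finset.Icc 0 n, ((pathsF n k).card + (2*n - k).choose (n+1))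
        = ∑ k ∈ Finset.Icc 0 n, (2*n - k).choose n :=
      Finset.sum_congr rfl (fun k hk => card_pathsF n k (Finset.mem_Icc.mp hk).2)
    rw [Finset.sum_add_distrib, sum_choose_shift n 0 (n+1) (Nat.zero_le n),
      sum_choose_shift n 0 n (Nat.zero_le n), sum_choose_succ, Nat.sum_Icc_choose] at hsum
    rw [show Finset.range (n+1) = Finset.Icc 0 n by
      rw [← Nat.Ico_zero_eq_range, Finset.Ico_add_one_right_eq_Icc]]
    rw [show 2*n - 0 = 2*n by omega] at hsum
    exact hsum
  set T := ∑ k ∈ Finset.range (n+1), (pathsF n k).card with hT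
  set A := (2*n+1).choose (n+1) with hA
  set B := (2*n+1).choose (n+2) with hB
  have h2 : B * (n+2) = A * n := by
    have := Nat.choose_succ_right_eq (2*n+1) (n+1)
    rwa [show 2*n+1-(n+1) = n by omega] at this
  have h3 : (n+1+1) * catalan (n+1) = (2*(n+1)).choose (n+1) :=
    succ_mul_catalan_eq_centralBinom (n+1)
  have h4 : (2*(n+1)).choose (n+1) = (2*n+1).choose n + A := by
    rw [show 2*(n+1) = 2*n+1+1 by ring]
    exact Nat.choose_succ_succ _ _
  have p3 : (2*n+1).choose n = A := by
    have := Nat.choose_symm (show n+1 ≤ 2*n+1 by omega)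
    rwa [show 2*n+1-(n+1) = n by omega] at this
  have h7 : (n+2) * catalan (n+1) = 2 * A := by
    rw [show (n+2) = (n+1+1) by rfl, h3, h4, p3]
    ring
  have h5 : (n+2) * T + (n+2) * B = (n+2) * A := by
    rw [← Nat.mul_add, h1]
  have h6 : (n+2) * B = n * A := by
    rw [Nat.mul_comm, h2, Nat.mul_comm]
  have h8 : (n+2) * A = n * A + 2 * A := by ring
  have h9 : (n+2) * T = (n+2) * catalan (n+1) := by
    rw [h7]
    omega
  exact Nat.eq_of_mul_eq_mul_left (by omega) h9

end RLPartialAux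

open RLPartialAux in
theorem rlPartialLuk_total_count (n : ℕ) :
    Nat.card {w : List ℤ // IsRLPartial w n} = catalan (n + 1) := by
  classical
  have hset : {w : List ℤ | IsRLPartial w n}
      = ↑((Finset.range (n+1)).biUnion (fun k => pathsF n k)) := by
    ext w
    simp only [Set.mem_setOf_eq, Finset.coe_biUnion, Set.mem_iUnion, Finset.mem_coe,
      Finset.mem_range]
    constructor
    · intro h
      obtain ⟨h0, hn⟩ := sum_bounds h
      refine ⟨w.sum.toNat, by omega, (mem_pathsF n _ w).mpr ⟨h, ?_⟩⟩
      omega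
    · rintro ⟨k, -, hk⟩
      exact ((mem_pathsF n k w).mp hk).1
  have h1 : Nat.card {w : List ℤ // IsRLPartial w n}
      = ((Finset.range (n+1)).biUnion (fun k => pathsF n k)).card := by
    calc Nat.card {w : List ℤ // IsRLPartial w n}
        = Set.ncard {w : List ℤ | IsRLPartial w n} := Nat.card_coe_set_eq _
      _ = _ := by rw [hset, Set.ncard_coe_finset]
  rw [h1, Finset.card_biUnion, total_catalan n]
  intro k1 h1 k2 h2 hne
  rw [Function.onFun, Finset.disjoint_left]
  intro w hw1 hw2
  have e1 := ((mem_pathsF n k1 w).mp hw1).2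
  have e2 := ((mem_pathsF n k2 w).mp hw2).2
  apply hne
  omega
end

section
/- Fix t ≥ 0 and let a_n be the number of partial Łukasiewicz paths of length n (ending at any height) all of whose partial sums lie in [0, t]. Then the formal power series identity F_t(z) · (Σ_{n≥0} a_n z^n) = 1 holds in ℤ⟦z⟧, where F_t(z) = Σ_{j ≥ 0, 2j ≤ t+2} (−1)^j · C(t+2−j, j) · z^j is the Fibonacci polynomial (equivalently: a_0 = 1 and for every n ≥ 1, Σ_j (−1)^j C(t+2−j, j) a_{n−j} = 0). -/
/-- A partial Łukasiewicz path of length `n` of height at most `t`: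
a list of `n` integer steps, each `≥ -1`, with all partial sums in `[0, t]`. -/
def IsBddPartialLuk (w : List ℤ) (n t : ℕ) : Prop :=
  w.length = n ∧ (∀ x ∈ w, -1 ≤ x) ∧
    (∀ i, 0 ≤ (w.take i).sum ∧ (w.take i).sum ≤ t)

/-- The Fibonacci polynomial `F_t(z) = Σ_j (-1)^j C(t+2-j, j) z^j`
(as a formal power series; `C(t+2-j, j) = 0` once `2j > t+2`). -/
noncomputable def fibPoly (t : ℕ) : PowerSeries ℤ :=
  PowerSeries.mk fun j => (-1) ^ j * (Nat.choose (t + 2 - j) j : ℤ)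

namespace LukAux

/-- Finset of bounded partial Łukasiewicz paths of length `n` with sum `h`. -/
def Luk (t : ℕ) : ℕ → ℕ → Finset (List ℤ)
  | 0, h => if h = 0 then {([] : List ℤ)} else ∅
  | n+1, h =>
      if h ≤ t then
        (Finset.range (min (h+1) t + 1)).biUnion
          (fun h' => (Luk t n h').image (fun u => u ++ [(h : ℤ) - (h' : ℤ)]))
      else ∅

lemma isBdd_concat (t : ℕ) (u : List ℤ) (s : ℤ) (n : ℕ) :
    IsBddPartialLuk (u ++ [s]) (n+1) t ↔
      IsBddPartialLuk u n t ∧ -1 ≤ s ∧ 0 ≤ u.sum + s ∧ u.sum + s ≤ t := by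
  constructor
  · rintro ⟨hl, hm, hs⟩
    have hul : u.length = n := by simpa using hl
    have hsum : (u ++ [s]).sum = u.sum + s := by simp
    refine ⟨⟨hul, fun x hx => hm x (by simp [hx]), fun i => ?_⟩, hm s (by simp), ?_, ?_⟩
    · by_cases hi : i ≤ u.length
      · have := hs i
        rwa [List.take_append_of_le_length hi] at this
      · rw [List.take_of_length_le (le_of_not_ge hi)]
        have := hs n
        rwa [List.take_append_of_le_length hul.ge, List.take_of_length_le hul.le] at this
    · have := (hs (n+1)).1
      rwa [List.take_of_length_le (by simp [hul]), hsum] at this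
    · have := (hs (n+1)).2
      rwa [List.take_of_length_le (by simp [hul]), hsum] at this
  · rintro ⟨⟨hl, hm, hs⟩, hs1, hs2, hs3⟩
    refine ⟨by simp [hl], ?_, fun i => ?_⟩
    · intro x hx
      rcases List.mem_append.1 hx with hx | hx
      · exact hm x hx
      · simp at hx; subst hx; exact hs1
    · by_cases hi : i ≤ u.length
      · rw [List.take_append_of_le_length hi]; exact hs i
      · rw [List.take_of_length_le (by simp; omega)]
        simpa using ⟨hs2, hs3⟩

lemma mem_Luk (t : ℕ) : ∀ (n : ℕ) (h : ℕ) (w : List ℤ),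
    w ∈ Luk t n h ↔ IsBddPartialLuk w n t ∧ w.sum = (h : ℤ) := by
  intro n
  induction n with
  | zero =>
    intro h w
    constructor
    · intro hw
      simp only [Luk] at hw
      by_cases h0 : h = 0
      · subst h0; simp at hw; subst hw
        exact ⟨⟨rfl, by simp, fun i => by simp⟩, by simp⟩
      · simp [h0] at hw
    · rintro ⟨⟨hl, -, -⟩, hsum⟩
      have : w = [] := List.length_eq_zero_iff.1 hl
      subst this
      simp at hsum
      have h0 : h = 0 := by exact_mod_cast hsum.symm
      simp [Luk, h0]
  | succ n ih =>
    intro h w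
    constructor
    · intro hw
      simp only [Luk] at hw
      by_cases ht : h ≤ t
      · simp only [ht, if_true, Finset.mem_biUnion, Finset.mem_range, Finset.mem_image] at hw
        obtain ⟨h', hh', u, hu, rfl⟩ := hw
        obtain ⟨hbdd, husum⟩ := (ih h' u).1 hu
        have hh'le : (h' : ℤ) ≤ (h : ℤ) + 1 := by
          have : h' ≤ min (h+1) t := Nat.lt_succ_iff.1 hh'
          exact_mod_cast le_trans this (min_le_left _ _)
        refine ⟨(isBdd_concat t u _ n).2 ⟨hbdd, by omega, by omega, by omega⟩, by simp [husum]⟩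
      · simp [ht] at hw
    · rintro ⟨hbdd, hsum⟩
      obtain ⟨u, s, rfl⟩ : ∃ u s, w = u ++ [s] := by
        rcases List.eq_nil_or_concat w with rfl | ⟨u, s, rfl⟩
        · exact absurd hbdd.1 (by simp)
        · exact ⟨u, s, by simp⟩
      obtain ⟨hbu, hs1, hs2, hs3⟩ := (isBdd_concat t u s n).1 hbdd
      have husum0 : 0 ≤ u.sum := by
        have := (hbu.2.2 n).1
        rwa [List.take_of_length_le (le_of_eq hbu.1)] at this
      have husumt : u.sum ≤ (t : ℤ) := by
        have := (hbu.2.2 n).2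
        rwa [List.take_of_length_le (le_of_eq hbu.1)] at this
      have hws : u.sum + s = (h : ℤ) := by simpa using hsum
      have hht : h ≤ t := by omega
      simp only [Luk, hht, if_true, Finset.mem_biUnion, Finset.mem_range, Finset.mem_image]
      refine ⟨u.sum.toNat, ?_, u, (ih _ u).2 ⟨hbu, by simp [husum0]⟩, ?_⟩
      · have h1 : (u.sum.toNat : ℤ) = u.sum := Int.toNat_of_nonneg husum0
        have e1 : u.sum.toNat ≤ h + 1 := by omega
        have e2 : u.sum.toNat ≤ t := by omega
        exact Nat.lt_succ_of_le (le_min e1 e2)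
      · have h1 : (u.sum.toNat : ℤ) = u.sum := Int.toNat_of_nonneg husum0
        rw [h1]
        have hs' : (h : ℤ) - u.sum = s := by omega
        rw [hs']

end LukAux

namespace LukAux2
open LukAux Finset

lemma disj_aux (t n h : ℕ) : ∀ h₁ ∈ Finset.range (min (h+1) t + 1), ∀ h₂ ∈ Finset.range (min (h+1) t + 1),
    h₁ ≠ h₂ → Disjoint ((Luk t n h₁).image (fun u => u ++ [(h : ℤ) - (h₁ : ℤ)]))
      ((Luk t n h₂).image (fun u => u ++ [(h : ℤ) - (h₂ : ℤ)])) := by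
  intro h₁ _ h₂ _ hne
  rw [Finset.disjoint_left]
  rintro w hw1 hw2
  simp only [Finset.mem_image] at hw1 hw2
  obtain ⟨u₁, -, rfl⟩ := hw1
  obtain ⟨u₂, -, he⟩ := hw2
  have : (h : ℤ) - (h₂ : ℤ) = (h : ℤ) - (h₁ : ℤ) := by
    simpa using congrArg List.getLast? he
  exact absurd (show h₁ = h₂ by omega) hne

lemma card_Luk_zero (t h : ℕ) : (Luk t 0 h).card = if h = 0 then 1 else 0 := by
  simp only [Luk]
  split <;> simp

lemma card_Luk_succ (t n h : ℕ) (ht : h ≤ t) :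
    (Luk t (n+1) h).card = ∑ h' ∈ Finset.range (min (h+1) t + 1), (Luk t n h').card := by
  rw [show Luk t (n+1) h = (Finset.range (min (h+1) t + 1)).biUnion
      (fun h' => (Luk t n h').image (fun u => u ++ [(h : ℤ) - (h' : ℤ)])) by
        simp only [Luk, ht, if_true]]
  rw [Finset.card_biUnion (disj_aux t n h)]
  refine Finset.sum_congr rfl fun h' _ => ?_
  exact Finset.card_image_of_injective _ (List.append_left_injective _)

lemma card_a (t n : ℕ) : Nat.card {w : List ℤ // IsBddPartialLuk w n t}
    = ∑ h ∈ Finset.range (t+1), (Luk t n h).card := by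
  have hset : {w : List ℤ | IsBddPartialLuk w n t}
      = ↑((Finset.range (t+1)).biUnion (Luk t n)) := by
    ext w
    simp only [Set.mem_setOf_eq, Finset.coe_biUnion, Finset.mem_coe, Finset.mem_range,
      Set.mem_iUnion, mem_Luk]
    constructor
    · intro hw
      have h0 : 0 ≤ w.sum := by
        have := (hw.2.2 n).1
        rwa [List.take_of_length_le (le_of_eq hw.1)] at this
      have h1 : w.sum ≤ (t : ℤ) := by
        have := (hw.2.2 n).2
        rwa [List.take_of_length_le (le_of_eq hw.1)] at this
      exact ⟨w.sum.toNat, by omega, hw, by omega⟩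
    · rintro ⟨h, -, hw, -⟩
      exact hw
  have hdisj : ∀ h₁ ∈ Finset.range (t+1), ∀ h₂ ∈ Finset.range (t+1), h₁ ≠ h₂ →
      Disjoint (Luk t n h₁) (Luk t n h₂) := by
    intro h₁ _ h₂ _ hne
    rw [Finset.disjoint_left]
    intro w hw1 hw2
    have e1 := ((mem_Luk t n h₁ w).1 hw1).2
    have e2 := ((mem_Luk t n h₂ w).1 hw2).2
    exact absurd (show h₁ = h₂ by omega) hne
  calc Nat.card {w : List ℤ // IsBddPartialLuk w n t}
      = Set.ncard {w : List ℤ | IsBddPartialLuk w n t} := Nat.card_coe_set_eq _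
    _ = ((Finset.range (t+1)).biUnion (Luk t n)).card := by
        rw [hset, Set.ncard_coe_finset]
    _ = ∑ h ∈ Finset.range (t+1), (Luk t n h).card := Finset.card_biUnion hdisj

end LukAux2

namespace LukAux3
open LukAux LukAux2 PowerSeries

noncomputable def A (t h : ℕ) : PowerSeries ℤ := PowerSeries.mk fun n => ((Luk t n h).card : ℤ)

noncomputable def T (t h : ℕ) : PowerSeries ℤ := ∑ h' ∈ Finset.range (h+1), A t h'

noncomputable def P (k : ℕ) : PowerSeries ℤ :=
  PowerSeries.mk fun j => (-1) ^ j * (Nat.choose (k - j) j : ℤ)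

lemma coeff_T (t h n : ℕ) : (PowerSeries.coeff n) (T t h)
    = ∑ h' ∈ Finset.range (h+1), ((Luk t n h').card : ℤ) := by
  simp [T, A]

lemma R1 (t h : ℕ) (ht : h ≤ t) :
    A t h = (if h = 0 then 1 else 0) + PowerSeries.X * T t (min (h+1) t) := by
  ext n
  cases n with
  | zero =>
    simp only [A, coeff_mk, map_add, coeff_zero_eq_constantCoeff, map_mul, constantCoeff_X,
      zero_mul, add_zero, card_Luk_zero]
    split <;> simp
  | succ n =>
    simp only [A, coeff_mk, map_add, coeff_succ_X_mul, coeff_T]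
    rw [card_Luk_succ t n h ht]
    have : (PowerSeries.coeff (n+1)) (if h = 0 then (1 : PowerSeries ℤ) else 0) = 0 := by
      split <;> simp
    rw [this]
    push_cast
    ring

lemma P_zero : P 0 = 1 := by
  ext j
  cases j with
  | zero => simp [P]
  | succ j => simp [P, Nat.choose_zero_succ]

lemma P_one : P 1 = 1 := by
  ext j
  match j with
  | 0 => simp [P]
  | 1 => simp [P]
  | (j+2) => simp [P, show 1 - (j+2) = 0 by omega, Nat.choose_zero_succ]

lemma P_rec (k : ℕ) : P (k+2) = P (k+1) - PowerSeries.X * P k := by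
  ext j
  cases j with
  | zero => simp [P]
  | succ j =>
    simp only [P, coeff_mk, map_sub, coeff_succ_X_mul]
    have hch : (k + 2 - (j+1)).choose (j+1) = (k + 1 - (j+1)).choose (j+1) + (k - j).choose j := by
      by_cases hj : j ≤ k
      · rw [show k + 2 - (j+1) = (k - j) + 1 by omega, show k + 1 - (j+1) = k - j by omega,
          Nat.choose_succ_succ']
        omega
      · rw [show k + 2 - (j+1) = 0 by omega, show k + 1 - (j+1) = 0 by omega,
          show k - j = 0 by omega, show j = (j-1) + 1 by omega]
        simp [Nat.choose_zero_succ]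
    rw [hch]
    push_cast
    ring

lemma desc (t : ℕ) (ht : 1 ≤ t) : ∀ k, k ≤ t - 1 → A t (t - k) = P k * A t t := by
  intro k
  induction k using Nat.strong_induction_on with
  | _ k ih =>
    match k with
    | 0 =>
      intro _
      rw [Nat.sub_zero, P_zero, one_mul]
    | 1 =>
      intro hk
      have ht2 : 2 ≤ t := by omega
      have e1 : A t (t-1) = PowerSeries.X * T t t := by
        rw [R1 t (t-1) (by omega), show min (t-1+1) t = t by omega, if_neg (by omega), zero_add]
      have e2 : A t t = PowerSeries.X * T t t := by
        rw [R1 t t le_rfl, show min (t+1) t = t by omega, if_neg (by omega), zero_add]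
      rw [e1, ← e2, P_one, one_mul]
    | (k+2) =>
      intro hk
      have ht3 : k + 3 ≤ t := by omega
      have e0 : A t (t - (k+2)) = PowerSeries.X * T t (t - (k+2) + 1) := by
        rw [R1 t (t - (k+2)) (by omega), show min (t - (k+2) + 1) t = t - (k+2) + 1 by omega,
          if_neg (by omega), zero_add]
      have e1 : A t (t - (k+2) + 1) = PowerSeries.X * T t (t - (k+2) + 2) := by
        rw [R1 t (t - (k+2) + 1) (by omega),
          show min (t - (k+2) + 1 + 1) t = t - (k+2) + 2 by omega,
          if_neg (by omega), zero_add]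
      have e2 : T t (t - (k+2) + 2) = T t (t - (k+2) + 1) + A t (t - (k+2) + 2) := by
        simp only [T]
        rw [Finset.sum_range_succ]
      have ih1 : A t (t - (k+2) + 1) = P (k+1) * A t t := by
        have := ih (k+1) (by omega) (by omega)
        rwa [show t - (k+1) = t - (k+2) + 1 by omega] at this
      have ih2 : A t (t - (k+2) + 2) = P k * A t t := by
        have := ih k (by omega) (by omega)
        rwa [show t - k = t - (k+2) + 2 by omega] at this
      have key : A t (t - (k+2)) = A t (t - (k+2) + 1) - PowerSeries.X * A t (t - (k+2) + 2) := by
        rw [e0, e1, e2]; ring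
      rw [P_rec, key, ih1, ih2]; ring

lemma A_zero_eq (t : ℕ) (ht : 1 ≤ t) : A t 0 = 1 + P t * A t t := by
  have h0 : A t 0 = 1 + PowerSeries.X * T t 1 := by
    rw [R1 t 0 (by omega), show min (0+1) t = 1 by omega, if_pos rfl]
  rcases eq_or_lt_of_le ht with heq | ht2
  · -- t = 1
    subst heq
    have e1 : A 1 1 = PowerSeries.X * T 1 1 := by
      rw [R1 1 1 le_rfl, show min (1+1) 1 = 1 by omega, if_neg (by omega), zero_add]
    rw [h0, ← e1, P_one, one_mul]
  · -- t ≥ 2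
    have e1 : A t 1 = PowerSeries.X * T t 2 := by
      rw [R1 t 1 (by omega), show min (1+1) t = 2 by omega, if_neg (by omega), zero_add]
    have e2 : T t 2 = T t 1 + A t 2 := by
      simp only [T]; rw [Finset.sum_range_succ]
    have d1 : A t 1 = P (t-1) * A t t := by
      have := desc t ht (t-1) (by omega)
      rwa [show t - (t-1) = 1 by omega] at this
    have d2 : A t 2 = P (t-2) * A t t := by
      have := desc t ht (t-2) (by omega)
      rwa [show t - (t-2) = 2 by omega] at this
    have hP : P t = P (t-1) - PowerSeries.X * P (t-2) := by
      have := P_rec (t-2)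
      rwa [show t - 2 + 2 = t by omega, show t - 2 + 1 = t - 1 by omega] at this
    rw [h0, hP]
    have : PowerSeries.X * T t 1 = A t 1 - PowerSeries.X * A t 2 := by
      rw [e1, e2]; ring
    rw [this, d1, d2]; ring

lemma main_pos (t : ℕ) (ht : 1 ≤ t) : P (t+2) * T t t = 1 := by
  have h0 : A t 0 = 1 + PowerSeries.X * T t 1 := by
    rw [R1 t 0 (by omega), show min (0+1) t = 1 by omega, if_pos rfl]
  have hT1 : T t 1 = A t 0 + A t 1 := by
    simp only [T]
    rw [Finset.sum_range_succ, Finset.sum_range_one]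
  have hA0 : A t 0 = 1 + P t * A t t := A_zero_eq t ht
  have hA1 : A t 1 = P (t-1) * A t t := by
    have := desc t ht (t-1) (by omega)
    rwa [show t - (t-1) = 1 by omega] at this
  have hPt1 : P (t+1) = P t - PowerSeries.X * P (t-1) := by
    have := P_rec (t-1)
    rwa [show t - 1 + 2 = t + 1 by omega, show t - 1 + 1 = t by omega] at this
  have hPt2 : P (t+2) = P (t+1) - PowerSeries.X * P t := P_rec t
  have h0' : 1 + P t * A t t = 1 + PowerSeries.X *
      ((1 + P t * A t t) + P (t-1) * A t t) := by
    rw [← hA0, ← hA1, ← hT1, ← h0]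
  have hX : P (t+2) * A t t = PowerSeries.X := by
    linear_combination h0' + A t t * hPt2 + A t t * hPt1
  have hAt : A t t = PowerSeries.X * T t t := by
    rw [R1 t t le_rfl, show min (t+1) t = t by omega, if_neg (by omega), zero_add]
  have h2 : PowerSeries.X * (P (t+2) * T t t) = P (t+2) * A t t := by
    rw [hAt]; ring
  exact mul_left_cancel₀ PowerSeries.X_ne_zero (by rw [h2, hX, mul_one])

lemma main_all (t : ℕ) : P (t+2) * T t t = 1 := by
  rcases Nat.eq_zero_or_pos t with rfl | ht
  · have h0 : A 0 0 = 1 + PowerSeries.X * T 0 0 := by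
      rw [R1 0 0 le_rfl]
      norm_num
    have hT : T 0 0 = A 0 0 := by
      simp [T, Finset.sum_range_one]
    rw [hT] at h0
    rw [P_rec 0, P_one, P_zero, hT]
    linear_combination h0
  · exact main_pos t ht

end LukAux3


theorem bddPartialLuk_gf (t : ℕ) :
    fibPoly t *
      PowerSeries.mk
        (fun n => (Nat.card {w : List ℤ // IsBddPartialLuk w n t} : ℤ)) = 1 := by
  have hfib : fibPoly t = LukAux3.P (t+2) := rfl
  have hmk : PowerSeries.mk
      (fun n => (Nat.card {w : List ℤ // IsBddPartialLuk w n t} : ℤ)) = LukAux3.T t t := by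
    ext n
    rw [PowerSeries.coeff_mk, LukAux3.coeff_T, LukAux2.card_a]
    push_cast
    rfl
  rw [hfib, hmk]
  exact LukAux3.main_all t
end

section
/- Fix t ≥ 2 and let b_n be the number of right-to-left partial Łukasiewicz paths of length n (ending at any height) all of whose partial sums lie in [0, t]. Then the formal power series identity F_t(z) · (Σ_{n≥0} b_n z^n) = F_{t−2}(z) holds in ℤ⟦z⟧, where F_t(z) = Σ_{j ≥ 0, 2j ≤ t+2} (−1)^j · C(t+2−j, j) · z^j is the Fibonacci polynomial. -/
/-- A right-to-left partial Łukasiewicz path of length `n` of height at most `t`: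
a list of `n` integer steps, each `≤ 1`, with all partial sums in `[0, t]`. -/
def IsBddRLPartialLuk (w : List ℤ) (n t : ℕ) : Prop :=
  w.length = n ∧ (∀ x ∈ w, x ≤ 1) ∧
    (∀ i, 0 ≤ (w.take i).sum ∧ (w.take i).sum ≤ t)

namespace BddLuk

open PowerSeries

/-- Finset of bounded right-to-left partial Łukasiewicz paths of length `n`. -/
noncomputable def pf (t : ℕ) : ℕ → Finset (List ℤ)
  | 0 => {[]}
  | n + 1 =>
    (((pf t n) ×ˢ (Finset.Icc (-(t : ℤ)) 1)).filter
      (fun p => 0 ≤ p.1.sum + p.2 ∧ p.1.sum + p.2 ≤ (t : ℤ))).image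
      (fun p => p.1.concat p.2)

lemma mem_pf_iff (t : ℕ) : ∀ n (w : List ℤ), w ∈ pf t n ↔ IsBddRLPartialLuk w n t := by
  intro n
  induction n with
  | zero =>
    intro w
    constructor
    · intro h
      simp only [pf, Finset.mem_singleton] at h
      subst h
      exact ⟨rfl, by simp, fun i => by simp⟩
    · rintro ⟨h1, -, -⟩
      simp only [pf, Finset.mem_singleton]
      exact List.length_eq_zero_iff.mp h1
  | succ n ih =>
    intro w
    constructor
    · intro h
      simp only [pf, Finset.mem_image, Finset.mem_filter, Finset.mem_product,
        Finset.mem_Icc] at h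
      obtain ⟨⟨v, x⟩, ⟨⟨hv, hx⟩, hs0, hst⟩, rfl⟩ := h
      obtain ⟨hl, hsteps, hps⟩ := (ih v).mp hv
      refine ⟨by simp [List.concat_eq_append, hl], ?_, ?_⟩
      · intro y hy
        rw [List.concat_eq_append, List.mem_append, List.mem_singleton] at hy
        rcases hy with hy | rfl
        · exact hsteps y hy
        · exact hx.2
      · intro i
        rw [List.concat_eq_append]
        rcases le_or_gt i v.length with hi | hi
        · rw [List.take_append_of_le_length hi]; exact hps i
        · rw [List.take_of_length_le (by simp; omega)]
          simpa using ⟨hs0, hst⟩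
    · rintro ⟨h1, hsteps, hps⟩
      have hne : w ≠ [] := by intro h; simp [h] at h1
      set v := w.dropLast with hv
      set x := w.getLast hne with hx
      have hw : v ++ [x] = w := List.dropLast_append_getLast hne
      have hvt : v = w.take n := by
        rw [hv, List.dropLast_eq_take, h1]; simp
      have hvmem : v ∈ pf t n := by
        apply (ih v).mpr
        refine ⟨by simp [hv, h1], fun y hy => hsteps y (List.dropLast_sublist w |>.mem hy), ?_⟩
        intro i
        rw [hvt, List.take_take]
        exact hps (min i n)
      have hvsum : 0 ≤ v.sum ∧ v.sum ≤ (t : ℤ) := by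
        have := hps n
        rwa [← hvt] at this
      have hwsum : 0 ≤ v.sum + x ∧ v.sum + x ≤ (t : ℤ) := by
        have := hps (n + 1)
        rw [List.take_of_length_le (le_of_eq h1)] at this
        rw [← hw, List.sum_append, List.sum_singleton] at this
        exact this
      simp only [pf, Finset.mem_image, Finset.mem_filter, Finset.mem_product, Finset.mem_Icc]
      refine ⟨⟨v, x⟩, ⟨⟨hvmem, ?_, hsteps x (List.getLast_mem hne)⟩, hwsum.1, hwsum.2⟩, ?_⟩
      · omega
      · rw [List.concat_eq_append, hw]

lemma sum_mem_pf {t n : ℕ} {w : List ℤ} (h : w ∈ pf t n) : 0 ≤ w.sum ∧ w.sum ≤ (t : ℤ) := by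
  obtain ⟨h1, -, hps⟩ := (mem_pf_iff t n w).mp h
  have := hps w.length
  rwa [List.take_length] at this

/-- Number of bounded paths of length `n` ending at height `s`. -/
noncomputable def cnt (t n s : ℕ) : ℕ := ((pf t n).filter (fun w => w.sum = (s : ℤ))).card

lemma cnt_zero (t s : ℕ) : cnt t 0 s = if s = 0 then 1 else 0 := by
  unfold cnt pf
  rw [Finset.filter_singleton]
  rcases eq_or_ne s 0 with rfl | hs
  · simp
  · rw [if_neg (by simpa using fun h => hs (by exact_mod_cast h.symm)), if_neg hs]
    simp

lemma filter_sum_pf_succ (t n s : ℕ) (hst : s ≤ t) :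
    (pf t (n + 1)).filter (fun w => w.sum = (s : ℤ)) =
      ((pf t n).filter (fun v => (s : ℤ) - 1 ≤ v.sum)).image
        (fun v => v.concat ((s : ℤ) - v.sum)) := by
  ext w
  simp only [Finset.mem_filter, Finset.mem_image, pf, Finset.mem_product, Finset.mem_Icc]
  constructor
  · rintro ⟨hmem, hsum⟩
    obtain ⟨⟨v, x⟩, ⟨⟨hv, hx⟩, hs0, hst'⟩, rfl⟩ := hmem
    dsimp only at hv hx hs0 hst' hsum ⊢
    rw [List.concat_eq_append, List.sum_append, List.sum_singleton] at hsum
    refine ⟨v, ⟨hv, by omega⟩, ?_⟩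
    congr 1
    omega
  · rintro ⟨v, ⟨hv, hge⟩, rfl⟩
    have hvs := sum_mem_pf hv
    refine ⟨⟨⟨v, (s : ℤ) - v.sum⟩, ⟨⟨hv, by dsimp only; omega, by dsimp only; omega⟩,
      by dsimp only; omega, by dsimp only; omega⟩, rfl⟩, ?_⟩
    rw [List.concat_eq_append, List.sum_append, List.sum_singleton]
    ring

lemma card_filter_ge (t n s : ℕ) :
    ((pf t n).filter (fun v => (s : ℤ) - 1 ≤ v.sum)).card =
      ∑ h ∈ Finset.Icc (s - 1) t, cnt t n h := by
  rw [Finset.card_eq_sum_card_fiberwise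
    (f := fun w => w.sum.toNat) (t := Finset.Icc (s - 1) t) ?_]
  · apply Finset.sum_congr rfl
    intro h hh
    rw [Finset.mem_Icc] at hh
    rw [Finset.filter_filter]
    unfold cnt
    congr 1
    apply Finset.filter_congr
    intro w hw
    have hws := sum_mem_pf hw
    omega
  · intro w hw
    rw [Finset.mem_coe, Finset.mem_filter] at hw
    have hws := sum_mem_pf hw.1
    have h2 : (s : ℤ) - 1 ≤ w.sum := by simpa using hw.2
    show w.sum.toNat ∈ Finset.Icc (s - 1) t
    rw [Finset.mem_Icc]
    omega

lemma cnt_succ (t n s : ℕ) (hst : s ≤ t) :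
    cnt t (n + 1) s = ∑ h ∈ Finset.Icc (s - 1) t, cnt t n h := by
  have hinj : Set.InjOn (fun v : List ℤ => v.concat ((s : ℤ) - v.sum))
      ((pf t n).filter (fun v => (s : ℤ) - 1 ≤ v.sum)) := by
    intro v₁ h₁ v₂ h₂ he
    have := congrArg List.dropLast he
    simpa [List.dropLast_concat] using this
  have key : cnt t (n + 1) s = ((pf t n).filter (fun v => (s : ℤ) - 1 ≤ v.sum)).card := by
    unfold cnt
    rw [filter_sum_pf_succ t n s hst, Finset.card_image_of_injOn hinj]
  rw [key, card_filter_ge]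

lemma card_pf (t n : ℕ) : (pf t n).card = ∑ h ∈ Finset.Icc 0 t, cnt t n h := by
  rw [Finset.card_eq_sum_card_fiberwise
    (f := fun w => w.sum.toNat) (t := Finset.Icc 0 t) ?_]
  · apply Finset.sum_congr rfl
    intro h hh
    unfold cnt
    congr 1
    apply Finset.filter_congr
    intro w hw
    have hws := sum_mem_pf hw
    omega
  · intro w hw
    have hws := sum_mem_pf hw
    show w.sum.toNat ∈ Finset.Icc 0 t
    rw [Finset.mem_Icc]
    omega

/-- Generating function for paths ending at height `s`. -/
noncomputable def V (t s : ℕ) : PowerSeries ℤ := PowerSeries.mk fun n => (cnt t n s : ℤ)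

/-- Tail generating functions. -/
noncomputable def T (t h : ℕ) : PowerSeries ℤ := ∑ k ∈ Finset.Icc h t, V t k

lemma coeff_T (t h n : ℕ) :
    (PowerSeries.coeff n) (T t h) = ∑ k ∈ Finset.Icc h t, (cnt t n k : ℤ) := by
  unfold T V
  rw [map_sum]
  simp [PowerSeries.coeff_mk]

lemma T_top (t : ℕ) : T t (t + 1) = 0 := by
  unfold T
  rw [Finset.Icc_eq_empty (by omega), Finset.sum_empty]

lemma V_zero_eq (t : ℕ) : V t 0 = 1 + X * T t 0 := by
  ext n
  cases n with
  | zero =>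
    simp [V, PowerSeries.coeff_mk, cnt_zero, PowerSeries.coeff_zero_eq_constantCoeff]
  | succ n =>
    rw [map_add, PowerSeries.coeff_succ_X_mul, coeff_T]
    have h1 : (PowerSeries.coeff (n + 1)) (1 : PowerSeries ℤ) = 0 := by
      rw [PowerSeries.coeff_one]
      simp
    rw [h1, zero_add]
    simp only [V, PowerSeries.coeff_mk]
    rw [cnt_succ t n 0 (by omega)]
    push_cast
    rfl

lemma V_eq (t s : ℕ) (h1 : 1 ≤ s) (h2 : s ≤ t) : V t s = X * T t (s - 1) := by
  ext n
  cases n with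
  | zero =>
    rw [PowerSeries.coeff_zero_eq_constantCoeff, map_mul, PowerSeries.constantCoeff_X,
      zero_mul]
    simp [V, PowerSeries.coeff_mk, cnt_zero]
    omega
  | succ n =>
    rw [PowerSeries.coeff_succ_X_mul, coeff_T]
    simp only [V, PowerSeries.coeff_mk]
    rw [cnt_succ t n s h2]
    push_cast
    rfl

lemma T_succ_eq (t h : ℕ) (hh : h ≤ t) : T t h = V t h + T t (h + 1) := by
  unfold T
  rw [show Finset.Icc h t = insert h (Finset.Icc (h + 1) t) by
    ext k; simp only [Finset.mem_Icc, Finset.mem_insert]; omega]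
  rw [Finset.sum_insert (by simp only [Finset.mem_Icc]; omega)]

lemma T_rel (t h : ℕ) (h1 : 1 ≤ h) (h2 : h ≤ t) :
    T t h = X * T t (h - 1) + T t (h + 1) := by
  rw [T_succ_eq t h h2, V_eq t h h1 h2]

lemma T_rel0 (t : ℕ) : T t 0 = (1 + X * T t 0) + T t 1 := by
  conv_lhs => rw [T_succ_eq t 0 (Nat.zero_le t), V_zero_eq]

/-- The "second-kind" Fibonacci-like sequence of power series. -/
noncomputable def u : ℕ → PowerSeries ℤ
  | 0 => 0
  | 1 => 1
  | (n + 2) => u (n + 1) - X * u n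

lemma u_rec (n : ℕ) : u (n + 2) = u (n + 1) - X * u n := by rfl

lemma u_zero : u 0 = 0 := rfl

lemma u_one : u 1 = 1 := rfl

lemma u_eq_mk : ∀ m, u (m + 1) = PowerSeries.mk fun j => (-1) ^ j * ((m - j).choose j : ℤ)
  | 0 => by
    show (1 : PowerSeries ℤ) = _
    ext j
    rw [PowerSeries.coeff_mk]
    cases j with
    | zero => simp
    | succ j =>
      have z : (0 - (j + 1)).choose (j + 1) = 0 := Nat.choose_eq_zero_of_lt (by omega)
      simp [PowerSeries.coeff_one, z]
  | 1 => by
    rw [u_rec]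
    show (1 : PowerSeries ℤ) - X * 0 = _
    ext j
    rw [mul_zero, sub_zero, PowerSeries.coeff_mk]
    cases j with
    | zero => simp
    | succ j =>
      have z : (1 - (j + 1)).choose (j + 1) = 0 := Nat.choose_eq_zero_of_lt (by omega)
      simp [PowerSeries.coeff_one, z]
  | (m + 2) => by
    rw [u_rec, u_eq_mk (m + 1), u_eq_mk m]
    ext j
    rw [PowerSeries.coeff_mk, map_sub, PowerSeries.coeff_mk]
    cases j with
    | zero =>
      rw [PowerSeries.coeff_zero_eq_constantCoeff, map_mul, PowerSeries.constantCoeff_X,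
        zero_mul, sub_zero]
      simp
    | succ j =>
      rw [PowerSeries.coeff_succ_X_mul, PowerSeries.coeff_mk]
      have key : (m + 2 - (j + 1)).choose (j + 1)
          = (m + 1 - (j + 1)).choose (j + 1) + (m - j).choose j := by
        rcases le_or_gt (j + 1) (m + 1) with hj | hj
        · have e1 : m + 2 - (j + 1) = (m - j) + 1 := by omega
          have e2 : m + 1 - (j + 1) = m - j := by omega
          rw [e1, e2, Nat.choose_succ_succ']
          omega
        · have e1 : m + 2 - (j + 1) = 0 := by omega
          have e2 : m + 1 - (j + 1) = 0 := by omega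
          have e3 : m - j = 0 := by omega
          have z1 : Nat.choose 0 (j + 1) = 0 := Nat.choose_eq_zero_of_lt (by omega)
          have z3 : Nat.choose 0 j = 0 := Nat.choose_eq_zero_of_lt (by omega)
          rw [e1, e2, e3, z1, z3]
      rw [key]
      push_cast
      ring

lemma fibPoly_eq_u (t : ℕ) : fibPoly t = u (t + 3) := by
  rw [show t + 3 = (t + 2) + 1 by ring, u_eq_mk]
  rfl

lemma T_formula (t : ℕ) (ht : 1 ≤ t) :
    ∀ h, 1 ≤ h → h ≤ t + 1 → T t h = u h * T t 1 - X * (u (h - 1) * T t 0) := by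
  intro h
  induction h using Nat.strong_induction_on with
  | _ h ih =>
    match h with
    | 0 => intro h0 _; omega
    | 1 =>
      intro _ _
      rw [u_one, u_zero]
      simp
    | 2 =>
      intro _ h2
      have hrel := T_rel t 1 le_rfl (by omega)
      rw [show (1:ℕ) - 1 = 0 from rfl, show (1:ℕ) + 1 = 2 from rfl] at hrel
      have h2' : T t 2 = T t 1 - X * T t 0 := by linear_combination -hrel
      rw [h2', show (2:ℕ) - 1 = 1 from rfl, u_one,
        show u 2 = 1 by rw [u_rec 0, u_one, u_zero]; ring]
      ring
    | (h + 3) =>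
      intro _ hle
      have hrel := T_rel t (h + 2) (by omega) (by omega)
      rw [show h + 2 - 1 = h + 1 by omega, show h + 2 + 1 = h + 3 from rfl] at hrel
      have e1 := ih (h + 2) (by omega) (by omega) (by omega)
      have e2 := ih (h + 1) (by omega) (by omega) (by omega)
      have hT : T t (h + 3) = T t (h + 2) - X * T t (h + 1) := by linear_combination -hrel
      rw [hT, e1, e2, show h + 2 - 1 = h + 1 by omega, show h + 1 - 1 = h by omega,
        show h + 3 - 1 = h + 2 by omega, u_rec (h + 1), u_rec h]
      ring

lemma main_identity (t : ℕ) (ht : 2 ≤ t) : fibPoly t * T t 0 = fibPoly (t - 2) := by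
  have hf2 : fibPoly (t - 2) = u (t + 1) := by
    rw [fibPoly_eq_u (t - 2), show t - 2 + 3 = t + 1 by omega]
  have hE1 : u (t + 1) * T t 1 - X * (u t * T t 0) = 0 := by
    have := T_formula t (by omega) (t + 1) (by omega) (by omega)
    rw [show t + 1 - 1 = t by omega] at this
    rw [← this, T_top]
  have hE2 : T t 0 = (1 + X * T t 0) + T t 1 := T_rel0 t
  rw [fibPoly_eq_u t, hf2, u_rec (t + 1), u_rec t]
  linear_combination hE1 + u (t + 1) * hE2

end BddLuk

theorem bddRLPartialLuk_gf (t : ℕ) (ht : 2 ≤ t) :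
    fibPoly t *
      PowerSeries.mk
        (fun n => (Nat.card {w : List ℤ // IsBddRLPartialLuk w n t} : ℤ)) =
      fibPoly (t - 2) := by
  have hB : PowerSeries.mk
      (fun n => (Nat.card {w : List ℤ // IsBddRLPartialLuk w n t} : ℤ)) = BddLuk.T t 0 := by
    ext n
    rw [PowerSeries.coeff_mk, BddLuk.coeff_T]
    have e : {w : List ℤ // IsBddRLPartialLuk w n t} ≃ {w : List ℤ // w ∈ BddLuk.pf t n} :=
      Equiv.subtypeEquivRight (fun w => (BddLuk.mem_pf_iff t n w).symm)
    rw [Nat.card_congr e, Nat.card_eq_finsetCard, BddLuk.card_pf]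
    push_cast
    rfl
  rw [hB]
  exact BddLuk.main_identity t ht
end
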